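/- arXiv:1903.00048 — 7 statements merged into one kernel-verified Lean document; each statement's English description precedes it below -/
import Mathlib

section
/- Let {z(t)} be a nonnegative real sequence satisfying z(t+1) = (1 - r1(t)) z(t) + r2(t) with z(0) ≥ 0, where r1(t) = a1/(t+1)^{δ1} and r2(t) = a2/(t+1)^{δ2}, with 0 ≤ r1(t) ≤ 1 for all t, a1 > 0, a2 > 0, 0 ≤ δ1 < 1, δ2 ≥ 0, and δ1 < δ2. Then for every δ0 ∈ [0, δ2 − δ1), lim_{t→∞} (t+1)^{δ0} z(t) = 0. -/
set_option maxHeartbeats 1000000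


open Filter

theorem scalar_recursion_lemma_case1
    (z : ℕ → ℝ) (a1 a2 δ1 δ2 : ℝ)
    (hz0 : 0 ≤ z 0)
    (ha1 : 0 < a1) (ha2 : 0 < a2)
    (hδ1 : 0 ≤ δ1) (hδ1' : δ1 < 1) (hδ2 : 0 ≤ δ2) (hδ12 : δ1 < δ2)
    (hr1 : ∀ t : ℕ, 0 ≤ a1 / ((t : ℝ) + 1) ^ δ1 ∧ a1 / ((t : ℝ) + 1) ^ δ1 ≤ 1)
    (hrec : ∀ t : ℕ,
      z (t + 1) = (1 - a1 / ((t : ℝ) + 1) ^ δ1) * z t + a2 / ((t : ℝ) + 1) ^ δ2) :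
    ∀ δ0 : ℝ, 0 ≤ δ0 → δ0 < δ2 - δ1 →
      Tendsto (fun t : ℕ => ((t : ℝ) + 1) ^ δ0 * z t) atTop (nhds 0) := by
  have hzpos : ∀ t, 0 ≤ z t := by
    intro t
    induction t with
    | zero => exact hz0
    | succ n ih =>
      have h1 := (hr1 n).2
      have hc : (0:ℝ) ≤ (1 - a1 / ((n:ℝ)+1) ^ δ1) * z n :=
        mul_nonneg (by linarith) ih
      have h2 : (0:ℝ) ≤ a2 / ((n:ℝ)+1) ^ δ2 := by positivity
      rw [hrec n]; push_cast; linarith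
  intro δ0 hδ0 hδ0'
  set γ : ℝ := (δ0 + (δ2 - δ1)) / 2 with hγdef
  have hγpos : 0 < γ := by simp only [hγdef]; linarith
  have hδ0γ : δ0 < γ := by simp only [hγdef]; linarith
  have hγlt : γ + δ1 < δ2 := by simp only [hγdef]; linarith
  -- tendsto of natural cast +1
  have hnat : Tendsto (fun t : ℕ => (t : ℝ) + 1) atTop atTop :=
    tendsto_atTop_add_const_right _ 1 tendsto_natCast_atTop_atTop
  have hrp : ∀ e : ℝ, e < 0 →
      Tendsto (fun t : ℕ => ((t : ℝ) + 1) ^ e) atTop (nhds 0) := by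
    intro e he
    have := (tendsto_rpow_neg_atTop (y := -e) (by linarith)).comp hnat
    simpa [Function.comp_def] using this
  -- Step 1: eventual inequality
  have htend : Tendsto (fun t : ℕ =>
      γ * ((t:ℝ)+1) ^ (δ1 - 1) + a2 * ((t:ℝ)+1) ^ (γ + δ1 - δ2)) atTop (nhds 0) := by
    have h1 := (hrp (δ1 - 1) (by linarith)).const_mul γ
    have h2 := (hrp (γ + δ1 - δ2) (by linarith)).const_mul a2
    simpa using h1.add h2
  have hev : ∀ᶠ t : ℕ in atTop,
      γ * ((t:ℝ)+1) ^ (δ1 - 1) + a2 * ((t:ℝ)+1) ^ (γ + δ1 - δ2) ≤ a1 :=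
    htend.eventually (eventually_le_nhds ha1)
  obtain ⟨T, hT⟩ := eventually_atTop.mp hev
  set K : ℝ := max 1 (z T * ((T:ℝ)+1) ^ γ) with hKdef
  have hK1 : (1:ℝ) ≤ K := le_max_left _ _
  have hKpos : (0:ℝ) < K := by linarith
  have key : ∀ t, T ≤ t → z t ≤ K * ((t:ℝ)+1) ^ (-γ) := by
    intro t ht
    induction t, ht using Nat.le_induction with
    | base =>
      have hu : (0:ℝ) < (T:ℝ) + 1 := by positivity
      have h1 : z T * ((T:ℝ)+1) ^ γ ≤ K := le_max_right _ _
      have h2 : ((T:ℝ)+1) ^ γ * ((T:ℝ)+1) ^ (-γ) = 1 := by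
        rw [← Real.rpow_add hu]; simp
      calc z T = z T * (((T:ℝ)+1) ^ γ * ((T:ℝ)+1) ^ (-γ)) := by rw [h2]; ring
        _ = (z T * ((T:ℝ)+1) ^ γ) * ((T:ℝ)+1) ^ (-γ) := by ring
        _ ≤ K * ((T:ℝ)+1) ^ (-γ) := by
            apply mul_le_mul_of_nonneg_right h1 (by positivity)
    | succ n hn ih =>
      set u : ℝ := (n:ℝ) + 1 with hudef
      have hu0 : (0:ℝ) < u := by positivity
      have hu1 : (1:ℝ) ≤ u := by simp only [hudef]; linarith [Nat.cast_nonneg (α := ℝ) n]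
      -- rpow product identities
      have e1 : u ^ (δ1 - 1) * u ^ (-(γ + δ1)) = u ^ (-γ - 1) := by
        rw [← Real.rpow_add hu0]; ring_nf
      have e2 : u ^ (γ + δ1 - δ2) * u ^ (-(γ + δ1)) = u ^ (-δ2) := by
        rw [← Real.rpow_add hu0]; ring_nf
      have e3 : u ^ (-δ1) * u ^ (-γ) = u ^ (-(γ + δ1)) := by
        rw [← Real.rpow_add hu0]; ring_nf
      have e4 : u ^ (-γ) * u ^ (-(1:ℝ)) = u ^ (-γ - 1) := by
        rw [← Real.rpow_add hu0]; ring_nf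
      -- the key numeric inequality from hT
      have hTn := hT n hn
      have hmul : (γ * u ^ (δ1 - 1) + a2 * u ^ (γ + δ1 - δ2)) * u ^ (-(γ + δ1))
          ≤ a1 * u ^ (-(γ + δ1)) :=
        mul_le_mul_of_nonneg_right hTn (by positivity)
      have hstar : γ * u ^ (-γ - 1) + a2 * u ^ (-δ2) ≤ a1 * u ^ (-(γ + δ1)) := by
        calc γ * u ^ (-γ - 1) + a2 * u ^ (-δ2)
            = (γ * u ^ (δ1 - 1) + a2 * u ^ (γ + δ1 - δ2)) * u ^ (-(γ + δ1)) := by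
              rw [add_mul, mul_assoc, mul_assoc, e1, e2]
          _ ≤ a1 * u ^ (-(γ + δ1)) := hmul
      -- convexity-type bound: (u+1)^(-γ) ≥ u^(-γ) * (1 - γ/u)
      have hlog : Real.log (1 + 1/u) ≤ 1/u := by
        have := Real.log_le_sub_one_of_pos (x := 1 + 1/u) (by positivity)
        linarith
      have hbern : 1 - γ * (1/u) ≤ (1 + 1/u) ^ (-γ) := by
        rw [Real.rpow_def_of_pos (by positivity)]
        have h1 : 1 + Real.log (1 + 1/u) * (-γ) ≤ Real.exp (Real.log (1 + 1/u) * (-γ)) := by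
          linarith [Real.add_one_le_exp (Real.log (1 + 1/u) * (-γ))]
        have h2 : Real.log (1 + 1/u) * (-γ) ≥ -(γ * (1/u)) := by
          have := mul_le_mul_of_nonneg_left hlog hγpos.le
          nlinarith
        linarith [h1, h2]
      have hsplit : (u + 1) ^ (-γ) = u ^ (-γ) * (1 + 1/u) ^ (-γ) := by
        rw [← Real.mul_rpow hu0.le (by positivity)]
        congr 1
        field_simp
      have hstep : u ^ (-γ) * (1 - γ * (1/u)) ≤ (u + 1) ^ (-γ) := by
        rw [hsplit]
        exact mul_le_mul_of_nonneg_left hbern (by positivity)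
      -- rewrite the recursion
      have hrecn := hrec n
      have hdiv1 : a1 / u ^ δ1 = a1 * u ^ (-δ1) := by
        rw [Real.rpow_neg hu0.le]; ring
      have hdiv2 : a2 / u ^ δ2 = a2 * u ^ (-δ2) := by
        rw [Real.rpow_neg hu0.le]; ring
      have hc := (hr1 n).2
      have hcoef : (0:ℝ) ≤ 1 - a1 * u ^ (-δ1) := by
        rw [← hdiv1]; linarith
      have hzb : z (n+1) ≤ (1 - a1 * u ^ (-δ1)) * (K * u ^ (-γ)) + a2 * u ^ (-δ2) := by
        rw [hrecn, hdiv1, hdiv2]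
        have := mul_le_mul_of_nonneg_left ih hcoef
        linarith
      -- final combination
      have hK2 : a2 * u ^ (-δ2) ≤ K * (a1 * u ^ (-(γ + δ1))) - K * (γ * u ^ (-γ - 1)) := by
        have hnn : (0:ℝ) ≤ a1 * u ^ (-(γ + δ1)) - γ * u ^ (-γ - 1) := by
          have : (0:ℝ) ≤ a2 * u ^ (-δ2) := by positivity
          linarith
        calc a2 * u ^ (-δ2) ≤ a1 * u ^ (-(γ + δ1)) - γ * u ^ (-γ - 1) := by linarith
          _ = 1 * (a1 * u ^ (-(γ + δ1)) - γ * u ^ (-γ - 1)) := by ring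
          _ ≤ K * (a1 * u ^ (-(γ + δ1)) - γ * u ^ (-γ - 1)) :=
            mul_le_mul_of_nonneg_right hK1 hnn
          _ = K * (a1 * u ^ (-(γ + δ1))) - K * (γ * u ^ (-γ - 1)) := by ring
      have hgoal2 : (1 - a1 * u ^ (-δ1)) * (K * u ^ (-γ)) + a2 * u ^ (-δ2)
          ≤ K * ((u + 1) ^ (-γ)) := by
        have h5 : K * (u ^ (-γ) * (1 - γ * (1/u))) ≤ K * ((u+1) ^ (-γ)) :=
          mul_le_mul_of_nonneg_left hstep hKpos.le
        have huinv : u ^ (-γ) * (1/u) = u ^ (-γ - 1) := by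
          rw [← e4, Real.rpow_neg_one]; ring
        have expand : (1 - a1 * u ^ (-δ1)) * (K * u ^ (-γ))
            = K * u ^ (-γ) - K * (a1 * u ^ (-(γ + δ1))) := by
          rw [← e3]; ring
        have expand2 : K * (u ^ (-γ) * (1 - γ * (1/u)))
            = K * u ^ (-γ) - K * (γ * u ^ (-γ - 1)) := by
          rw [← huinv]; ring
        linarith [hK2, h5, expand, expand2]
      have hcast : ((n+1:ℕ):ℝ) + 1 = u + 1 := by rw [hudef]; push_cast; ring
      rw [hcast]
      calc z (n+1) ≤ (1 - a1 * u ^ (-δ1)) * (K * u ^ (-γ)) + a2 * u ^ (-δ2) := hzb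
        _ ≤ K * ((u + 1) ^ (-γ)) := hgoal2
  -- Step 3: squeeze
  have hupper : ∀ᶠ t : ℕ in atTop,
      ((t:ℝ)+1) ^ δ0 * z t ≤ K * ((t:ℝ)+1) ^ (δ0 - γ) := by
    filter_upwards [eventually_ge_atTop T] with t ht
    have hu0 : (0:ℝ) < (t:ℝ) + 1 := by positivity
    have e5 : ((t:ℝ)+1) ^ δ0 * ((t:ℝ)+1) ^ (-γ) = ((t:ℝ)+1) ^ (δ0 - γ) := by
      rw [← Real.rpow_add hu0]; ring_nf
    calc ((t:ℝ)+1) ^ δ0 * z t ≤ ((t:ℝ)+1) ^ δ0 * (K * ((t:ℝ)+1) ^ (-γ)) :=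
          mul_le_mul_of_nonneg_left (key t ht) (by positivity)
      _ = K * (((t:ℝ)+1) ^ δ0 * ((t:ℝ)+1) ^ (-γ)) := by ring
      _ = K * ((t:ℝ)+1) ^ (δ0 - γ) := by rw [e5]
  have hlower : ∀ᶠ t : ℕ in atTop, 0 ≤ ((t:ℝ)+1) ^ δ0 * z t := by
    filter_upwards with t
    have := hzpos t
    positivity
  have hrhs : Tendsto (fun t : ℕ => K * ((t:ℝ)+1) ^ (δ0 - γ)) atTop (nhds 0) := by
    have := (hrp (δ0 - γ) (by linarith)).const_mul K
    simpa using this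
  exact squeeze_zero' hlower hupper hrhs
end

section
/- Let {z(t)} be a nonnegative real sequence satisfying z(t+1) = (1 - r1(t)) z(t) + r2(t) with z(0) ≥ 0, where r1(t) = a1/(t+1) and r2(t) = a2/(t+1)^{δ2}, with 0 ≤ r1(t) ≤ 1 for all t, a1 > 0, a2 > 0, δ2 > 1, and a scalar δ0 with 0 ≤ δ0 < δ2 − 1 and a1 > δ0. Then lim_{t→∞} (t+1)^{δ0} z(t) = 0. -/
open Filter

set_option maxHeartbeats 800000

/-- For `0 ≤ h` and `0 ≤ p`: `1 - p * h ≤ ((1 + h)⁻¹) ^ p`. -/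
lemma bernoulli_recip {h p : ℝ} (hh : 0 ≤ h) (hp : 0 ≤ p) :
    1 - p * h ≤ ((1 + h)⁻¹ : ℝ) ^ p := by
  have h1 : (0:ℝ) < 1 + h := by linarith
  rcases le_or_gt (1 - p * h) 0 with hneg | hpos
  · exact hneg.trans (Real.rpow_pos_of_pos (by positivity) p).le
  rcases le_or_gt 1 p with hp1 | hp1
  · -- Bernoulli with s = -h/(1+h) ≥ -1
    have hs : (-1 : ℝ) ≤ -(h / (1 + h)) := by
      rw [neg_le_neg_iff, div_le_one h1]; linarith
    have hb := one_add_mul_self_le_rpow_one_add hs hp1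
    have heq : (1 : ℝ) + -(h / (1 + h)) = (1 + h)⁻¹ := by field_simp; ring
    rw [heq] at hb
    refine le_trans ?_ hb
    have hd : h / (1 + h) ≤ h := by
      rw [div_le_iff₀ h1]; nlinarith
    nlinarith
  · -- 0 ≤ p < 1 : (1+h)^p ≤ 1 + p*h, so (1+h)⁻¹^p = ((1+h)^p)⁻¹ ≥ (1+p*h)⁻¹ ≥ 1-p*h
    have hb := rpow_one_add_le_one_add_mul_self (s := h) (by linarith) hp hp1.le
    have hy : (0:ℝ) < (1 + h) ^ p := Real.rpow_pos_of_pos h1 p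
    have key : (1 - p * h) * (1 + h) ^ p ≤ 1 := by
      calc (1 - p * h) * (1 + h) ^ p ≤ (1 - p * h) * (1 + p * h) := by nlinarith
      _ = 1 - (p*h)^2 := by ring
      _ ≤ 1 := by nlinarith
    rw [Real.inv_rpow h1.le, ← one_div, le_div_iff₀ hy]
    exact key

theorem scalar_recursion_lemma_case2
    (z : ℕ → ℝ) (a1 a2 δ0 δ2 : ℝ)
    (hz0 : 0 ≤ z 0)
    (ha1 : 0 < a1) (ha2 : 0 < a2)
    (hδ2 : 1 < δ2) (hδ0 : 0 ≤ δ0) (hδ02 : δ0 < δ2 - 1) (ha1δ0 : δ0 < a1)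
    (hr1 : ∀ t : ℕ, 0 ≤ a1 / ((t : ℝ) + 1) ∧ a1 / ((t : ℝ) + 1) ≤ 1)
    (hrec : ∀ t : ℕ,
      z (t + 1) = (1 - a1 / ((t : ℝ) + 1)) * z t + a2 / ((t : ℝ) + 1) ^ δ2) :
    Tendsto (fun t : ℕ => ((t : ℝ) + 1) ^ δ0 * z t) atTop (nhds 0) := by
  set β : ℝ := (δ0 + min a1 (δ2 - 1)) / 2 with hβdef
  have hmin : δ0 < min a1 (δ2 - 1) := lt_min ha1δ0 hδ02
  have hβ1 : δ0 < β := by simp only [hβdef]; linarith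
  have hβ2 : β < a1 := by
    have := min_le_left a1 (δ2 - 1); simp only [hβdef]; linarith
  have hβ3 : β < δ2 - 1 := by
    have := min_le_right a1 (δ2 - 1); simp only [hβdef]; linarith
  have hβ0 : 0 ≤ β := le_trans hδ0 hβ1.le
  set C : ℝ := max (z 0) (a2 / (a1 - β)) with hCdef
  have hC0 : 0 ≤ C := le_trans hz0 (le_max_left _ _)
  have hCz : z 0 ≤ C := le_max_left _ _
  have hCa : a2 ≤ C * (a1 - β) := by
    have h : a2 / (a1 - β) ≤ C := le_max_right _ _
    have hpos : (0:ℝ) < a1 - β := by linarith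
    calc a2 = a2 / (a1 - β) * (a1 - β) := by field_simp
    _ ≤ C * (a1 - β) := by nlinarith
  -- nonnegativity of z
  have hznn : ∀ t, 0 ≤ z t := by
    intro t
    induction t with
    | zero => exact hz0
    | succ n ih =>
      rw [hrec n]
      have h1 := (hr1 n).2
      have h2 : (0:ℝ) < ((n:ℝ) + 1) ^ δ2 := by positivity
      have h3 : 0 ≤ a2 / ((n:ℝ) + 1) ^ δ2 := by positivity
      nlinarith
  -- main bound
  have key : ∀ t : ℕ, z t ≤ C / ((t : ℝ) + 1) ^ β := by
    intro t
    induction t with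
    | zero => simpa using hCz
    | succ n ih =>
      rw [hrec n]
      have hn1 : (0:ℝ) < (n:ℝ) + 1 := by positivity
      have hn2 : (0:ℝ) < (n:ℝ) + 2 := by positivity
      have hp1 : (0:ℝ) < ((n:ℝ) + 1) ^ β := Real.rpow_pos_of_pos hn1 β
      have hp2 : (0:ℝ) < ((n:ℝ) + 2) ^ β := Real.rpow_pos_of_pos hn2 β
      have hr1n := hr1 n
      have step1 : (1 - a1 / ((n:ℝ) + 1)) * z n ≤ (1 - a1 / ((n:ℝ) + 1)) * (C / ((n:ℝ)+1) ^ β) :=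
        mul_le_mul_of_nonneg_left ih (by linarith [hr1n.2])
      -- ratio bound: 1 - β/(n+1) ≤ ((n+1)/(n+2))^β
      have hratio : (1 - β / ((n:ℝ) + 1)) ≤ (((n:ℝ)+1) / ((n:ℝ)+2)) ^ β := by
        have hb := bernoulli_recip (h := 1/((n:ℝ)+1)) (p := β) (by positivity) hβ0
        have heq : ((1:ℝ) + 1/((n:ℝ)+1))⁻¹ = ((n:ℝ)+1) / ((n:ℝ)+2) := by
          rw [one_add_div hn1.ne', inv_div]
          ring_nf
        rw [heq] at hb
        calc (1 - β / ((n:ℝ) + 1)) = 1 - β * (1/((n:ℝ)+1)) := by ring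
        _ ≤ _ := hb
      have hratio' : (((n:ℝ)+1) / ((n:ℝ)+2)) ^ β = ((n:ℝ)+1)^β / ((n:ℝ)+2)^β :=
        Real.div_rpow hn1.le hn2.le β
      have hδβ : (0:ℝ) < δ2 - β - 1 := by linarith
      have hpow_ge : (1:ℝ) ≤ ((n:ℝ)+1) ^ (δ2 - β - 1) :=
        Real.one_le_rpow (by linarith) hδβ.le
      have hsplit : ((n:ℝ)+1) ^ δ2 = ((n:ℝ)+1) ^ (β+1) * ((n:ℝ)+1) ^ (δ2 - β - 1) := by
        rw [← Real.rpow_add hn1]; ring_nf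
      have hpb1 : (0:ℝ) < ((n:ℝ)+1) ^ (β+1) := Real.rpow_pos_of_pos hn1 _
      have hpδ2 : (0:ℝ) < ((n:ℝ)+1) ^ δ2 := Real.rpow_pos_of_pos hn1 _
      have hterm : a2 / ((n:ℝ)+1) ^ δ2 ≤ C * (a1 - β) / ((n:ℝ)+1) ^ (β+1) := by
        rw [hsplit, div_le_div_iff₀ (by positivity) hpb1]
        calc a2 * ((n:ℝ)+1) ^ (β+1)
            ≤ C * (a1 - β) * ((n:ℝ)+1) ^ (β+1) := by nlinarith
          _ ≤ C * (a1 - β) * (((n:ℝ)+1) ^ (β+1) * ((n:ℝ)+1) ^ (δ2-β-1)) := by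
              have hCab : 0 ≤ C * (a1 - β) := le_trans ha2.le hCa
              nlinarith [mul_le_mul_of_nonneg_left hpow_ge hpb1.le]
      have hpow_succ : ((n:ℝ)+1) ^ (β+1) = ((n:ℝ)+1) ^ β * ((n:ℝ)+1) := by
        rw [Real.rpow_add hn1, Real.rpow_one]
      have hcast : ((n+1 : ℕ) : ℝ) + 1 = (n:ℝ) + 2 := by push_cast; ring
      rw [hcast]
      have h2 : (1 - a1 / ((n:ℝ) + 1)) * (C / ((n:ℝ)+1) ^ β)
            + C * (a1 - β) / ((n:ℝ)+1) ^ (β+1)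
          = (C / ((n:ℝ)+1) ^ β) * (1 - β / ((n:ℝ)+1)) := by
        rw [hpow_succ]; field_simp; ring
      have h5 : (C / ((n:ℝ)+1) ^ β) * (1 - β / ((n:ℝ)+1))
          ≤ (C / ((n:ℝ)+1) ^ β) * ((((n:ℝ)+1) / ((n:ℝ)+2)) ^ β) :=
        mul_le_mul_of_nonneg_left hratio (by positivity)
      have h6 : (C / ((n:ℝ)+1) ^ β) * ((((n:ℝ)+1) / ((n:ℝ)+2)) ^ β)
          = C / ((n:ℝ)+2) ^ β := by
        rw [hratio']
        field_simp
      linarith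
  -- squeeze
  have hub : ∀ t : ℕ, ((t:ℝ)+1) ^ δ0 * z t ≤ C * ((t:ℝ)+1) ^ (δ0 - β) := by
    intro t
    have hn1 : (0:ℝ) < (t:ℝ) + 1 := by positivity
    have hpβ : (0:ℝ) < ((t:ℝ)+1) ^ β := Real.rpow_pos_of_pos hn1 β
    have hpδ : (0:ℝ) < ((t:ℝ)+1) ^ δ0 := Real.rpow_pos_of_pos hn1 δ0
    have h1 : ((t:ℝ)+1) ^ δ0 * z t ≤ ((t:ℝ)+1) ^ δ0 * (C / ((t:ℝ)+1) ^ β) :=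
      mul_le_mul_of_nonneg_left (key t) hpδ.le
    have h2 : ((t:ℝ)+1) ^ δ0 * (C / ((t:ℝ)+1) ^ β) = C * ((t:ℝ)+1) ^ (δ0 - β) := by
      rw [Real.rpow_sub hn1]
      field_simp
    linarith
  have hlb : ∀ t : ℕ, 0 ≤ ((t:ℝ)+1) ^ δ0 * z t := by
    intro t
    have h : (0:ℝ) < ((t:ℝ)+1) ^ δ0 := Real.rpow_pos_of_pos (by positivity) δ0
    exact mul_nonneg h.le (hznn t)
  have htend : Tendsto (fun t : ℕ => C * ((t:ℝ)+1) ^ (δ0 - β)) atTop (nhds 0) := by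
    have h1 : Tendsto (fun t : ℕ => ((t:ℝ)+1)) atTop atTop :=
      tendsto_atTop_add_const_right _ 1 tendsto_natCast_atTop_atTop
    have h2 : Tendsto (fun x : ℝ => x ^ (-(β - δ0))) atTop (nhds 0) :=
      tendsto_rpow_neg_atTop (by linarith)
    have h3 : Tendsto (fun t : ℕ => ((t:ℝ)+1) ^ (δ0 - β)) atTop (nhds 0) := by
      have h4 := h2.comp h1
      have heq : (fun t : ℕ => ((t:ℝ)+1) ^ (δ0 - β))
          = (fun x : ℝ => x ^ (-(β - δ0))) ∘ (fun t : ℕ => ((t:ℝ)+1)) := by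
        funext t; simp only [Function.comp_apply]; congr 1; ring
      rw [heq]; exact h4
    have h5 := h3.const_mul C
    simpa using h5
  exact tendsto_of_tendsto_of_tendsto_of_le_of_le tendsto_const_nhds htend hlb hub
end

section
/- Let L ∈ ℝ^{N×N} be the Laplacian of a connected undirected graph on N vertices, and let H_1, …, H_N with H_i ∈ ℝ^{m_i × n} satisfy that G = Σ_{i=1}^N H_i^T H_i is positive definite (full rank). Let D_H = blockdiag(H_1^T H_1, …, H_N^T H_N) ∈ ℝ^{Nn×Nn}. Then the symmetric matrix L ⊗ I_n + D_H is positive definite. -/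
open Matrix Kronecker

theorem lapKron_add_DH_posDef {N n : ℕ} (hN : 0 < N)
    (L : Matrix (Fin N) (Fin N) ℝ)
    (hLpsd : L.PosSemidef)
    (hL1 : L *ᵥ (fun _ => (1 : ℝ)) = 0)
    -- connectedness: the null space of L is spanned by the all-ones vector
    (hker : ∀ x : Fin N → ℝ, L *ᵥ x = 0 → ∃ c : ℝ, x = fun _ => c)
    (m : Fin N → ℕ) (H : ∀ i : Fin N, Matrix (Fin (m i)) (Fin n) ℝ)
    (hG : (∑ i : Fin N, (H i)ᵀ * H i).PosDef) :
    (L ⊗ₖ (1 : Matrix (Fin n) (Fin n) ℝ) +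
      Matrix.of (fun p q : Fin N × Fin n =>
        if p.1 = q.1 then ((H p.1)ᵀ * H p.1) p.2 q.2 else 0)).PosDef := by
  have hBpsd : ∀ i, ((H i)ᵀ * H i).PosSemidef := fun i => by
    have := posSemidef_conjTranspose_mul_self (H i)
    rwa [conjTranspose_eq_transpose_of_trivial] at this
  -- quadratic form identities
  have quadK : ∀ x : Fin N × Fin n → ℝ,
      x ⬝ᵥ ((L ⊗ₖ (1 : Matrix (Fin n) (Fin n) ℝ)) *ᵥ x)
        = ∑ j : Fin n, (fun i => x (i,j)) ⬝ᵥ (L *ᵥ fun i => x (i,j)) := by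
    intro x
    simp [dotProduct, mulVec, kroneckerMap_apply, Matrix.one_apply, Finset.mul_sum,
      Fintype.sum_prod_type, mul_ite]
    rw [Finset.sum_comm]
  have quadD : ∀ x : Fin N × Fin n → ℝ,
      x ⬝ᵥ ((Matrix.of (fun p q : Fin N × Fin n =>
          if p.1 = q.1 then ((H p.1)ᵀ * H p.1) p.2 q.2 else 0)) *ᵥ x)
        = ∑ i : Fin N, (fun j => x (i,j)) ⬝ᵥ (((H i)ᵀ * H i) *ᵥ fun j => x (i,j)) := by
    intro x
    simp [dotProduct, mulVec, Finset.mul_sum, Fintype.sum_prod_type, mul_ite]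
  rw [posDef_iff_dotProduct_mulVec]
  constructor
  · -- Hermitian
    refine IsHermitian.add ?_ ?_
    · ext ⟨i, j⟩ ⟨k, l⟩
      simp only [conjTranspose_apply, kroneckerMap_apply, Matrix.one_apply, star_trivial]
      rw [← hLpsd.1.apply k i]
      simp [eq_comm, mul_comm]
    · ext ⟨i, j⟩ ⟨k, l⟩
      simp only [conjTranspose_apply, Matrix.of_apply, star_trivial]
      rcases eq_or_ne i k with rfl | h
      · simp [← (hBpsd i).1.apply l j]
      · simp [h, Ne.symm h]
  · intro x hx
    rw [star_trivial, add_mulVec, dotProduct_add, quadK, quadD]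
    -- both sums are nonnegative
    have hKnn : ∀ j : Fin n, 0 ≤ (fun i => x (i,j)) ⬝ᵥ (L *ᵥ fun i => x (i,j)) := by
      intro j
      simpa using hLpsd.dotProduct_mulVec_nonneg (fun i => x (i,j))
    have hDnn : ∀ i : Fin N, 0 ≤ (fun j => x (i,j)) ⬝ᵥ (((H i)ᵀ * H i) *ᵥ fun j => x (i,j)) := by
      intro i
      simpa using (hBpsd i).dotProduct_mulVec_nonneg (fun j => x (i,j))
    by_contra hle
    push_neg at hle
    have hzero : (∑ j : Fin n, (fun i => x (i,j)) ⬝ᵥ (L *ᵥ fun i => x (i,j)))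
        + ∑ i : Fin N, (fun j => x (i,j)) ⬝ᵥ (((H i)ᵀ * H i) *ᵥ fun j => x (i,j)) = 0 := by
      have h1 : 0 ≤ ∑ j : Fin n, (fun i => x (i,j)) ⬝ᵥ (L *ᵥ fun i => x (i,j)) :=
        Finset.sum_nonneg fun j _ => hKnn j
      have h2 : 0 ≤ ∑ i : Fin N, (fun j => x (i,j)) ⬝ᵥ (((H i)ᵀ * H i) *ᵥ fun j => x (i,j)) :=
        Finset.sum_nonneg fun i _ => hDnn i
      linarith
    have h1 : ∑ j : Fin n, (fun i => x (i,j)) ⬝ᵥ (L *ᵥ fun i => x (i,j)) = 0 := by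
      have h2 : 0 ≤ ∑ i : Fin N, (fun j => x (i,j)) ⬝ᵥ (((H i)ᵀ * H i) *ᵥ fun j => x (i,j)) :=
        Finset.sum_nonneg fun i _ => hDnn i
      have h1' : 0 ≤ ∑ j : Fin n, (fun i => x (i,j)) ⬝ᵥ (L *ᵥ fun i => x (i,j)) :=
        Finset.sum_nonneg fun j _ => hKnn j
      linarith
    have h2 : ∑ i : Fin N, (fun j => x (i,j)) ⬝ᵥ (((H i)ᵀ * H i) *ᵥ fun j => x (i,j)) = 0 := by
      linarith
    -- each column of x is constant
    have hcol : ∀ j : Fin n, ∃ c : ℝ, (fun i => x (i,j)) = fun _ => c := by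
      intro j
      apply hker
      rw [← (hLpsd.dotProduct_mulVec_zero_iff (fun i => x (i,j)))]
      have := (Finset.sum_eq_zero_iff_of_nonneg (fun j _ => hKnn j)).mp h1 j (Finset.mem_univ j)
      simpa using this
    choose c hc using hcol
    -- then each block vector equals c
    have hxc : ∀ i j, x (i, j) = c j := fun i j => congrFun (hc j) i
    -- quadratic form of G at c is zero
    have hGc : c ⬝ᵥ ((∑ i : Fin N, (H i)ᵀ * H i) *ᵥ c) = 0 := by
      have : ∀ i : Fin N, (fun j => x (i,j)) = c := fun i => funext fun j => hxc i j
      calc c ⬝ᵥ ((∑ i : Fin N, (H i)ᵀ * H i) *ᵥ c)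
          = ∑ i : Fin N, c ⬝ᵥ (((H i)ᵀ * H i) *ᵥ c) := by
            have hsum : (∑ i : Fin N, (H i)ᵀ * H i) *ᵥ c = ∑ i : Fin N, ((H i)ᵀ * H i) *ᵥ c := by
              ext j
              simp [mulVec, dotProduct, Matrix.sum_apply, Finset.sum_mul, Finset.sum_apply]
              rw [Finset.sum_comm]
            rw [hsum]
            simp only [dotProduct, Finset.sum_apply, Finset.mul_sum]
            rw [Finset.sum_comm]
        _ = ∑ i : Fin N, (fun j => x (i,j)) ⬝ᵥ (((H i)ᵀ * H i) *ᵥ fun j => x (i,j)) := by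
            refine Finset.sum_congr rfl fun i _ => by rw [this i]
        _ = 0 := h2
    have hc0 : c = 0 := by
      by_contra hc0
      have := hG.dotProduct_mulVec_pos hc0
      rw [star_trivial] at this
      linarith
    apply hx
    ext ⟨i, j⟩
    simp [hxc i j, hc0]
end

section
/- Let L ∈ ℝ^{N×N} be the Laplacian of a connected undirected graph and D_H ∈ ℝ^{Nn×Nn} a block-diagonal positive semidefinite matrix such that L ⊗ I_n + D_H is positive definite. Let α(t) = a/(t+1)^{τ1} and β(t) = b/(t+1)^{τ2} with a, b > 0 and 0 < τ2 ≤ τ1 ≤ 1. Then there exist a positive definite matrix M_0 ∈ ℝ^{Nn×Nn} and an integer T such that for all t > T: α(t) M_0 ⪯ β(t)(L ⊗ I_n) + α(t) D_H ≺ I_{Nn}. -/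
open Matrix Kronecker

private lemma kron_one_quad {N n : ℕ} (L : Matrix (Fin N) (Fin N) ℝ)
    (x : Fin N × Fin n → ℝ) :
    dotProduct x ((L ⊗ₖ (1 : Matrix (Fin n) (Fin n) ℝ)) *ᵥ x)
      = ∑ k : Fin n, dotProduct (fun i => x (i,k)) (L *ᵥ (fun i => x (i,k))) := by
  simp only [dotProduct, mulVec, kroneckerMap_apply, Fintype.sum_prod_type, one_apply,
    mul_ite, mul_one, mul_zero, Finset.sum_ite_eq, Finset.mem_univ, if_true]
  rw [Finset.sum_comm]
  refine Finset.sum_congr rfl fun k _ => Finset.sum_congr rfl fun i _ => ?_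
  rw [Finset.mul_sum]
  simp only [ite_mul, zero_mul, Finset.sum_ite_eq, Finset.mem_univ, if_true, Finset.mul_sum]

private lemma kron_one_psd {N n : ℕ} {L : Matrix (Fin N) (Fin N) ℝ} (h : L.PosSemidef) :
    (L ⊗ₖ (1 : Matrix (Fin n) (Fin n) ℝ)).PosSemidef := by
  rw [posSemidef_iff_dotProduct_mulVec]
  constructor
  · ext ⟨i, k⟩ ⟨j, l⟩
    have := congrFun (congrFun h.1 i) j
    simp only [conjTranspose_apply, star_trivial] at this ⊢
    simp only [kroneckerMap_apply, one_apply, this]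
    by_cases hkl : k = l <;> simp [hkl, eq_comm]
  · intro x
    rw [star_trivial, kron_one_quad]
    exact Finset.sum_nonneg fun k _ => by simpa using h.dotProduct_mulVec_nonneg (fun i => x (i, k))

/-- elementary bound on quadratic form -/
private lemma quad_le {m : Type*} [Fintype m] (K : Matrix m m ℝ) (x : m → ℝ) :
    dotProduct x (K *ᵥ x) ≤ (∑ p, ∑ q, |K p q|) * dotProduct x x := by
  have hxx : ∀ p q : m, |x p * x q| ≤ dotProduct x x := by
    intro p q
    have h1 : |x p * x q| ≤ (x p ^ 2 + x q ^ 2) / 2 := by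
      rw [abs_mul]
      nlinarith [sq_nonneg (|x p| - |x q|), sq_abs (x p), sq_abs (x q), abs_nonneg (x p), abs_nonneg (x q)]
    have h2 : x p ^ 2 ≤ dotProduct x x := by
      have := Finset.single_le_sum (f := fun i => x i * x i)
        (fun i _ => mul_self_nonneg (x i)) (Finset.mem_univ p)
      simpa [dotProduct, sq] using this
    have h3 : x q ^ 2 ≤ dotProduct x x := by
      have := Finset.single_le_sum (f := fun i => x i * x i)
        (fun i _ => mul_self_nonneg (x i)) (Finset.mem_univ q)
      simpa [dotProduct, sq] using this
    linarith
  calc dotProduct x (K *ᵥ x) = ∑ p, ∑ q, x p * K p q * x q := by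
        simp [dotProduct, mulVec, Finset.mul_sum, mul_assoc]
    _ ≤ ∑ p, ∑ q, |K p q| * dotProduct x x := by
        refine Finset.sum_le_sum fun p _ => Finset.sum_le_sum fun q _ => ?_
        calc x p * K p q * x q ≤ |x p * K p q * x q| := le_abs_self _
          _ = |K p q| * |x p * x q| := by
              rw [show x p * K p q * x q = K p q * (x p * x q) by ring, abs_mul]
          _ ≤ |K p q| * dotProduct x x := mul_le_mul_of_nonneg_left (hxx p q) (abs_nonneg _)
    _ = (∑ p, ∑ q, |K p q|) * dotProduct x x := by rw [Finset.sum_mul]; simp [Finset.sum_mul]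


private lemma herm_smul {m : Type*} [Fintype m] {A : Matrix m m ℝ} (h : A.IsHermitian)
    (c : ℝ) : (c • A).IsHermitian := by
  have : (c • A)ᴴ = c • Aᴴ := by
    ext i j
    simp [conjTranspose_apply]
  rw [Matrix.IsHermitian, this, h]

private lemma psd_smul {m : Type*} [Fintype m] {A : Matrix m m ℝ} (h : A.PosSemidef)
    {c : ℝ} (hc : 0 ≤ c) : (c • A).PosSemidef :=
  posSemidef_iff_dotProduct_mulVec.mpr ⟨herm_smul h.1 c, fun x => by
    rw [smul_mulVec, dotProduct_smul, smul_eq_mul]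
    exact mul_nonneg hc (h.dotProduct_mulVec_nonneg x)⟩

theorem exists_M0_loewner_bounds {N n : ℕ} (hN : 0 < N)
    (L : Matrix (Fin N) (Fin N) ℝ)
    (hLpsd : L.PosSemidef)
    (hL1 : L *ᵥ (fun _ => (1 : ℝ)) = 0)
    (hker : ∀ x : Fin N → ℝ, L *ᵥ x = 0 → ∃ c : ℝ, x = fun _ => c)
    (DH : Matrix (Fin N × Fin n) (Fin N × Fin n) ℝ)
    (hDHblock : ∀ p q : Fin N × Fin n, p.1 ≠ q.1 → DH p q = 0)
    (hDHpsd : DH.PosSemidef)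
    (hpos : (L ⊗ₖ (1 : Matrix (Fin n) (Fin n) ℝ) + DH).PosDef)
    (a b τ1 τ2 : ℝ) (ha : 0 < a) (hb : 0 < b)
    (hτ2 : 0 < τ2) (hτ21 : τ2 ≤ τ1) (hτ1 : τ1 ≤ 1) :
    ∃ (M0 : Matrix (Fin N × Fin n) (Fin N × Fin n) ℝ) (T : ℕ), M0.PosDef ∧
      ∀ t : ℕ, T < t →
        ((b / ((t : ℝ) + 1) ^ τ2) • (L ⊗ₖ (1 : Matrix (Fin n) (Fin n) ℝ))
            + (a / ((t : ℝ) + 1) ^ τ1) • DH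
            - (a / ((t : ℝ) + 1) ^ τ1) • M0).PosSemidef ∧
        ((1 : Matrix (Fin N × Fin n) (Fin N × Fin n) ℝ)
            - ((b / ((t : ℝ) + 1) ^ τ2) • (L ⊗ₖ (1 : Matrix (Fin n) (Fin n) ℝ))
              + (a / ((t : ℝ) + 1) ^ τ1) • DH)).PosDef := by
  set Lk : Matrix (Fin N × Fin n) (Fin N × Fin n) ℝ := L ⊗ₖ (1 : Matrix (Fin n) (Fin n) ℝ)
    with hLk
  have hLkpsd : Lk.PosSemidef := kron_one_psd hLpsd
  set K : Matrix (Fin N × Fin n) (Fin N × Fin n) ℝ := Lk + DH with hK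
  -- M0
  set M0 : Matrix (Fin N × Fin n) (Fin N × Fin n) ℝ := (b / a) • Lk + DH with hM0
  have hba : 0 < b / a := div_pos hb ha
  have hM0pd : M0.PosDef := by
    rw [posDef_iff_dotProduct_mulVec]
    constructor
    · exact ((herm_smul hLkpsd.1 (b / a)).add hDHpsd.1)
    · intro x hx
      have h1 := hLkpsd.dotProduct_mulVec_nonneg x
      have h2 := hDHpsd.dotProduct_mulVec_nonneg x
      have h3 := hpos.dotProduct_mulVec_pos hx
      rw [star_trivial] at h1 h2 h3 ⊢
      rw [hK, add_mulVec, dotProduct_add] at h3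
      rw [hM0, add_mulVec, dotProduct_add, smul_mulVec, dotProduct_smul, smul_eq_mul]
      rcases lt_or_ge 0 (dotProduct x (Lk *ᵥ x)) with h | h
      · nlinarith
      · have hLk0 : dotProduct x (Lk *ᵥ x) = 0 := le_antisymm h h1
        rw [hLk0] at h3 ⊢
        simpa using h3
  -- constant C
  set C : ℝ := (∑ p, ∑ q, |K p q|) + 1 with hC
  have hCpos : 0 < C := by
    have : (0:ℝ) ≤ ∑ p, ∑ q, |K p q| :=
      Finset.sum_nonneg fun p _ => Finset.sum_nonneg fun q _ => abs_nonneg _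
    linarith
  -- choose T
  obtain ⟨T, hT⟩ : ∃ T : ℕ, ∀ t : ℕ, T < t → (a + b) * C < ((t : ℝ) + 1) ^ τ2 := by
    have htend : Filter.Tendsto (fun t : ℕ => ((t : ℝ) + 1) ^ τ2) Filter.atTop Filter.atTop := by
      exact (tendsto_rpow_atTop hτ2).comp
        (Filter.tendsto_atTop_add_const_right _ 1 tendsto_natCast_atTop_atTop)
    have := (htend.eventually_gt_atTop ((a + b) * C)).exists_forall_of_atTop
    obtain ⟨T, hT⟩ := htend.eventually_gt_atTop ((a + b) * C) |>.exists_forall_of_atTop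
    exact ⟨T, fun t ht => hT t ht.le⟩
  refine ⟨M0, T, hM0pd, fun t ht => ?_⟩
  have h1le : (1:ℝ) ≤ (t : ℝ) + 1 := by
    have : (0:ℝ) ≤ (t : ℝ) := Nat.cast_nonneg t
    linarith
  have hp2 : (0:ℝ) < ((t : ℝ) + 1) ^ τ2 := Real.rpow_pos_of_pos (by positivity) _
  have hp1 : (0:ℝ) < ((t : ℝ) + 1) ^ τ1 := Real.rpow_pos_of_pos (by positivity) _
  have hple : ((t : ℝ) + 1) ^ τ2 ≤ ((t : ℝ) + 1) ^ τ1 :=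
    Real.rpow_le_rpow_of_exponent_le h1le hτ21
  set α : ℝ := a / ((t : ℝ) + 1) ^ τ1 with hα
  set β : ℝ := b / ((t : ℝ) + 1) ^ τ2 with hβ
  have hαpos : 0 < α := div_pos ha hp1
  have hβpos : 0 < β := div_pos hb hp2
  constructor
  · -- first inequality
    have key : β • Lk + α • DH - α • M0 = (β - α * (b / a)) • Lk := by
      rw [hM0]
      module
    rw [key]
    refine psd_smul hLkpsd ?_
    have : α * (b / a) = b / ((t : ℝ) + 1) ^ τ1 := by
      rw [hα, div_mul_div_comm, mul_comm a b, mul_div_mul_right _ _ (ne_of_gt ha)]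
    rw [this, hβ]
    have : b / ((t : ℝ) + 1) ^ τ1 ≤ b / ((t : ℝ) + 1) ^ τ2 :=
      div_le_div_of_nonneg_left hb.le hp2 hple
    linarith
  · -- second inequality
    have hsmall : (α + β) * C < 1 := by
      have hα2 : α ≤ a / ((t : ℝ) + 1) ^ τ2 := div_le_div_of_nonneg_left ha.le hp2 hple
      have : α + β ≤ (a + b) / ((t : ℝ) + 1) ^ τ2 := by
        rw [add_div]; exact add_le_add hα2 le_rfl
      have h2 : (a + b) / ((t : ℝ) + 1) ^ τ2 * C < 1 := by
        rw [div_mul_eq_mul_div, div_lt_one hp2]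
        exact hT t ht
      calc (α + β) * C ≤ (a + b) / ((t : ℝ) + 1) ^ τ2 * C :=
            mul_le_mul_of_nonneg_right this hCpos.le
        _ < 1 := h2
    rw [posDef_iff_dotProduct_mulVec]
    constructor
    · exact (isHermitian_one.sub ((herm_smul hLkpsd.1 β).add (herm_smul hDHpsd.1 α)))
    · intro x hx
      rw [star_trivial, sub_mulVec, dotProduct_sub, one_mulVec]
      have hxx : 0 < dotProduct x x := by
        obtain ⟨i, hi⟩ : ∃ i, x i ≠ 0 := Function.ne_iff.mp hx
        have h : (0:ℝ) < ∑ j, x j * x j :=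
          Finset.sum_pos' (fun j _ => mul_self_nonneg (x j))
            ⟨i, Finset.mem_univ i, mul_self_pos.mpr hi⟩
        simpa [dotProduct] using h
      have hquadLk := hLkpsd.dotProduct_mulVec_nonneg x
      have hquadDH := hDHpsd.dotProduct_mulVec_nonneg x
      rw [star_trivial] at hquadLk hquadDH
      have hS : dotProduct x ((β • Lk + α • DH) *ᵥ x)
          ≤ (α + β) * dotProduct x (K *ᵥ x) := by
        rw [add_mulVec, dotProduct_add, smul_mulVec, smul_mulVec,
          dotProduct_smul, dotProduct_smul, hK, add_mulVec, dotProduct_add]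
        simp only [smul_eq_mul]
        nlinarith
      have hKC : dotProduct x (K *ᵥ x) ≤ C * dotProduct x x := by
        have := quad_le K x
        have : dotProduct x (K *ᵥ x) ≤ (∑ p, ∑ q, |K p q|) * dotProduct x x := this
        nlinarith
      have hKnn : 0 ≤ dotProduct x (K *ᵥ x) := by
        rw [hK, add_mulVec, dotProduct_add]; linarith
      have : dotProduct x ((β • Lk + α • DH) *ᵥ x) ≤ (α + β) * (C * dotProduct x x) := by
        calc dotProduct x ((β • Lk + α • DH) *ᵥ x) ≤ (α + β) * dotProduct x (K *ᵥ x) := hS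
          _ ≤ (α + β) * (C * dotProduct x x) :=
              mul_le_mul_of_nonneg_left hKC (by positivity)
      nlinarith
end

section
/- Let e : ℕ → ℝ^d satisfy the recursion e(t+1) = P(t) e(t) + w(t), where for all t larger than some T, P(t) is a symmetric matrix with ‖P(t)‖ ≤ 1 − a m_0/(t+1)^{τ1} (with a, m_0 > 0, 0 < τ1 < 1) and ‖w(t)‖ ≤ c/(t+1)^{σ} with c > 0 and σ > τ1. Then lim_{t→∞} ‖e(t)‖ = 0. -/
open Filter Matrix

theorem error_recursion_tendsto_zero {d : ℕ}
    (e : ℕ → EuclideanSpace ℝ (Fin d))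
    (P : ℕ → Matrix (Fin d) (Fin d) ℝ)
    (w : ℕ → EuclideanSpace ℝ (Fin d))
    (a m0 τ1 c σ : ℝ) (T : ℕ)
    (ha : 0 < a) (hm0 : 0 < m0) (hτ1 : 0 < τ1) (hτ1' : τ1 < 1)
    (hc : 0 < c) (hσ : τ1 < σ)
    (hrec : ∀ t : ℕ, e (t + 1) = (Matrix.toEuclideanCLM (𝕜 := ℝ) (P t)) (e t) + w t)
    (hPsymm : ∀ t : ℕ, T < t → (P t).IsSymm)
    (hPnorm : ∀ t : ℕ, T < t →
      ‖Matrix.toEuclideanCLM (𝕜 := ℝ) (P t)‖ ≤ 1 - a * m0 / ((t : ℝ) + 1) ^ τ1)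
    (hw : ∀ t : ℕ, T < t → ‖w t‖ ≤ c / ((t : ℝ) + 1) ^ σ) :
    Tendsto (fun t : ℕ => ‖e t‖) atTop (nhds 0) := by
  have hx : ∀ t : ℕ, (0:ℝ) < (t:ℝ) + 1 := fun t => by positivity
  set α : ℕ → ℝ := fun t => a * m0 / ((t:ℝ) + 1) ^ τ1 with hαdef
  have hα0 : ∀ t, 0 < α t := fun t => by
    have := hx t
    have : (0:ℝ) < ((t:ℝ)+1) ^ τ1 := Real.rpow_pos_of_pos this τ1
    positivity
  have hαle : ∀ t, T < t → α t ≤ 1 := by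
    intro t ht
    have h0 : (0:ℝ) ≤ ‖Matrix.toEuclideanCLM (𝕜 := ℝ) (P t)‖ := norm_nonneg _
    have := hPnorm t ht
    simp only [hαdef]
    linarith
  have hstep : ∀ t, T < t → ‖e (t+1)‖ ≤ (1 - α t) * ‖e t‖ + c / ((t:ℝ)+1) ^ σ := by
    intro t ht
    rw [hrec t]
    refine (norm_add_le _ _).trans (add_le_add ?_ (hw t ht))
    refine (ContinuousLinearMap.le_opNorm _ _).trans ?_
    exact mul_le_mul_of_nonneg_right (hPnorm t ht) (norm_nonneg _)
  -- divergence of the partial sums of α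
  have hFdiv : Tendsto (fun n => ∑ i ∈ Finset.range n, α i) atTop atTop := by
    refine (not_summable_iff_tendsto_nat_atTop_of_nonneg (fun i => (hα0 i).le)).mp ?_
    intro hs
    have hs2 : Summable (fun i : ℕ => 1 / ((i:ℝ)+1) ^ τ1) := by
      have := hs.div_const (a * m0)
      refine this.congr fun i => ?_
      have h1 : (0:ℝ) < ((i:ℝ)+1) ^ τ1 := Real.rpow_pos_of_pos (hx i) τ1
      field_simp [hαdef]
      simp only [hαdef]
      exact div_mul_cancel₀ _ h1.ne'
    have hs3 : Summable (fun n : ℕ => 1 / (n:ℝ) ^ τ1) := by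
      rw [← summable_nat_add_iff 1]
      refine hs2.congr fun i => ?_
      push_cast
      ring_nf
    have := Real.summable_one_div_nat_rpow.mp hs3
    linarith
  -- main ε-argument
  rw [Metric.tendsto_atTop]
  intro ε hε
  set ε' : ℝ := ε / 2 with hε'def
  have hε' : 0 < ε' := by positivity
  -- find N beyond which the perturbation is small relative to α
  have hrpow : Tendsto (fun t : ℕ => ((t:ℝ)+1) ^ (σ - τ1)) atTop atTop := by
    apply (tendsto_rpow_atTop (by linarith : 0 < σ - τ1)).comp
    exact tendsto_atTop_add_const_right atTop 1 tendsto_natCast_atTop_atTop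
  have hev : ∀ᶠ t : ℕ in atTop, c / ε' ≤ ((t:ℝ)+1) ^ (σ - τ1) * (a * m0) := by
    have h1 : Tendsto (fun t : ℕ => ((t:ℝ)+1) ^ (σ - τ1) * (a * m0)) atTop atTop :=
      hrpow.atTop_mul_const (by positivity)
    exact h1.eventually_ge_atTop _
  obtain ⟨N0, hN0⟩ := hev.exists_forall_of_atTop
  set N : ℕ := max N0 (T + 1) with hNdef
  have hNT : T < N := lt_of_lt_of_le (Nat.lt_succ_self T) (le_max_right _ _)
  have hsmall : ∀ t, N ≤ t → c / ((t:ℝ)+1) ^ σ ≤ ε' * α t := by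
    intro t ht
    have h0 := hN0 t (le_trans (le_max_left _ _) ht)
    have hpτ : (0:ℝ) < ((t:ℝ)+1) ^ τ1 := Real.rpow_pos_of_pos (hx t) τ1
    have hpσ : (0:ℝ) < ((t:ℝ)+1) ^ σ := Real.rpow_pos_of_pos (hx t) σ
    have hsplit : ((t:ℝ)+1) ^ σ = ((t:ℝ)+1) ^ (σ - τ1) * ((t:ℝ)+1) ^ τ1 := by
      rw [← Real.rpow_add (hx t)]; ring_nf
    have key : c ≤ ε' * (((t:ℝ)+1) ^ (σ - τ1) * (a * m0)) := by
      rw [div_le_iff₀ hε'] at h0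
      linarith [mul_le_mul_of_nonneg_left h0 hε'.le]
    rw [div_le_iff₀ hpσ]
    simp only [hαdef]
    rw [hsplit]
    have : ε' * (a * m0 / ((t:ℝ)+1) ^ τ1) * (((t:ℝ)+1) ^ (σ - τ1) * ((t:ℝ)+1) ^ τ1)
        = ε' * (((t:ℝ)+1) ^ (σ - τ1) * (a * m0)) := by
      field_simp
    rw [this]
    exact key
  -- the shifted error process
  set v : ℕ → ℝ := fun t => max (‖e t‖ - ε') 0 with hvdef
  have hv0 : ∀ t, 0 ≤ v t := fun t => le_max_right _ _
  have hαnn : ∀ t, T < t → 0 ≤ 1 - α t := by intro t ht; linarith [hαle t ht]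
  have hstepv : ∀ t, N ≤ t → v (t+1) ≤ (1 - α t) * v t := by
    intro t ht
    have hTt : T < t := lt_of_lt_of_le hNT ht
    have h1 : ‖e (t+1)‖ - ε' ≤ (1 - α t) * v t := by
      have h2 : ‖e t‖ - ε' ≤ v t := le_max_left _ _
      have h3 := hstep t hTt
      have h4 := hsmall t ht
      have h5 := hαnn t hTt
      nlinarith [hα0 t]
    exact max_le h1 (mul_nonneg (hαnn t hTt) (hv0 t))
  have hind : ∀ k, v (N + k) ≤ v N * ∏ j ∈ Finset.range k, (1 - α (N + j)) := by
    intro k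
    induction k with
    | zero => simp
    | succ k ih =>
      have hTt : T < N + k := lt_of_lt_of_le hNT (Nat.le_add_right _ _)
      calc v (N + (k+1)) = v ((N + k) + 1) := by ring_nf
        _ ≤ (1 - α (N + k)) * v (N + k) := hstepv _ (Nat.le_add_right _ _)
        _ ≤ (1 - α (N + k)) * (v N * ∏ j ∈ Finset.range k, (1 - α (N + j))) :=
            mul_le_mul_of_nonneg_left ih (hαnn _ hTt)
        _ = v N * ∏ j ∈ Finset.range (k+1), (1 - α (N + j)) := by
            rw [Finset.prod_range_succ]; ring
  have hprod_le : ∀ k, ∏ j ∈ Finset.range k, (1 - α (N + j))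
      ≤ Real.exp (-(∑ j ∈ Finset.range k, α (N + j))) := by
    intro k
    rw [← Finset.sum_neg_distrib, Real.exp_sum]
    refine Finset.prod_le_prod (fun j _ => hαnn _ (lt_of_lt_of_le hNT (Nat.le_add_right _ _)))
      (fun j _ => ?_)
    have := Real.add_one_le_exp (-(α (N + j)))
    linarith
  have hSdiv : Tendsto (fun k => ∑ j ∈ Finset.range k, α (N + j)) atTop atTop := by
    have heq : ∀ k, ∑ j ∈ Finset.range k, α (N + j)
        = (∑ i ∈ Finset.range (N + k), α i) - ∑ i ∈ Finset.range N, α i := by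
      intro k
      rw [Finset.sum_range_add]
      ring
    have hshift : Tendsto (fun k : ℕ => N + k) atTop atTop := by
      simpa [add_comm] using tendsto_add_atTop_nat N
    simp only [heq, sub_eq_add_neg]
    exact tendsto_atTop_add_const_right atTop _ (hFdiv.comp hshift)
  have hexp0 : Tendsto (fun k => v N * Real.exp (-(∑ j ∈ Finset.range k, α (N + j))))
      atTop (nhds 0) := by
    have : Tendsto (fun k => Real.exp (-(∑ j ∈ Finset.range k, α (N + j)))) atTop (nhds 0) :=
      Real.tendsto_exp_atBot.comp (tendsto_neg_atTop_atBot.comp hSdiv)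
    simpa using this.const_mul (v N)
  have hvto : Tendsto (fun k => v (N + k)) atTop (nhds 0) := by
    refine squeeze_zero (fun k => hv0 _) (fun k => ?_) hexp0
    exact (hind k).trans (mul_le_mul_of_nonneg_left (hprod_le k) (hv0 N))
  have hvev : ∀ᶠ k in atTop, v (N + k) < ε' := hvto.eventually (gt_mem_nhds hε')
  obtain ⟨K, hK⟩ := hvev.exists_forall_of_atTop
  refine ⟨N + K, fun t ht => ?_⟩
  have ht' : v t < ε' := by
    have : t = N + (t - N) := by omega
    rw [this]
    exact hK (t - N) (by omega)
  have h1 : ‖e t‖ - ε' ≤ v t := le_max_left _ _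
  have : ‖e t‖ < ε := by
    have : ε' + ε' = ε := by rw [hε'def]; ring
    linarith
  simpa [Real.dist_eq, abs_of_nonneg (norm_nonneg _)] using this
end

section
/- Let u : ℕ → ℝ^n satisfy the centralized estimator recursion u(t+1) = u(t) + (α_c(t)/N) Σ_{i=1}^N H_i^T (y_i(t) − H_i u(t)), where y_i(t) = H_i θ + v_i(t), the v_i(t) are zero-mean i.i.d. over time with finite (2+ε)-moments, G = Σ_i H_i^T H_i is positive definite, α_c(t) = a_c/(t+1)^{τ_c} with a_c > 0 and 1/2 < τ_c ≤ 1. Then u(t) → θ almost surely. -/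
open Filter Finset Matrix MeasureTheory ProbabilityTheory MeasurableSpace

lemma recbound_tendsto_zero {γ δ b : ℕ → ℝ} {ρ : ℝ} (hρ : 0 < ρ)
    (hγpos : ∀ t, 0 ≤ γ t)
    (hγ1 : ∀ᶠ t in atTop, ρ * γ t ≤ 1)
    (hγdiv : Tendsto (fun T => ∑ t ∈ Finset.range T, γ t) atTop atTop)
    (hb0 : ∀ t, 0 ≤ b t)
    (hδ : Tendsto δ atTop (nhds 0)) (hδ0 : ∀ t, 0 ≤ δ t)
    (hrec : ∀ᶠ t in atTop, b (t+1) ≤ (1 - ρ * γ t) * b t + γ t * δ t) :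
    Tendsto b atTop (nhds 0) := by
  refine tendsto_order.2 ⟨fun a ha => ?_, fun ε hε => ?_⟩
  · exact Eventually.of_forall fun t => lt_of_lt_of_le ha (hb0 t)
  set ε' := ε / 3 with hε'
  have hε'pos : 0 < ε' := by positivity
  have hδ' : ∀ᶠ t in atTop, δ t ≤ ρ * ε' := by
    have := hδ.eventually (eventually_le_nhds (show (0:ℝ) < ρ * ε' by positivity))
    exact this
  obtain ⟨T1, hT1⟩ := (hδ'.and (hγ1.and hrec)).exists_forall_of_atTop
  set C := max (b T1 - ε') 0 with hC
  have hC0 : 0 ≤ C := le_max_right _ _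
  set P : ℕ → ℝ := fun k => ∏ j ∈ range k, (1 - ρ * γ (T1 + j)) with hP
  have hfac : ∀ j, 0 ≤ 1 - ρ * γ (T1 + j) := fun j => by
    have := (hT1 (T1 + j) (Nat.le_add_right _ _)).2.1
    linarith
  have hP0 : ∀ k, 0 ≤ P k := fun k => prod_nonneg fun j _ => hfac j
  have key : ∀ k, b (T1 + k) ≤ ε' + P k * C := by
    intro k
    induction k with
    | zero =>
      simp only [P, range_zero, prod_empty, one_mul, Nat.add_zero]
      rcases le_total (b T1 - ε') 0 with h | h
      · have : C = 0 := max_eq_right h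
        rw [this]; linarith
      · have : C = b T1 - ε' := max_eq_left h
        rw [this]; linarith
    | succ k ih =>
      have ht := hT1 (T1 + k) (Nat.le_add_right _ _)
      have hrec' := ht.2.2
      have hγ1' := ht.2.1
      have hδ'' := ht.1
      have hPk : P (k+1) = P k * (1 - ρ * γ (T1 + k)) := prod_range_succ _ _
      have h1 : b (T1 + (k+1)) ≤ (1 - ρ * γ (T1+k)) * b (T1+k) + γ (T1+k) * δ (T1+k) := by
        have : T1 + (k+1) = (T1 + k) + 1 := by ring
        rw [this]; exact hrec'
      have h2 : (1 - ρ * γ (T1+k)) * b (T1+k) ≤ (1 - ρ * γ (T1+k)) * (ε' + P k * C) :=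
        mul_le_mul_of_nonneg_left ih (hfac k)
      have h3 : γ (T1+k) * δ (T1+k) ≤ γ (T1+k) * (ρ * ε') :=
        mul_le_mul_of_nonneg_left hδ'' (hγpos _)
      have hPC : 0 ≤ P k * C := mul_nonneg (hP0 k) hC0
      calc b (T1 + (k+1)) ≤ (1 - ρ * γ (T1+k)) * (ε' + P k * C) + γ (T1+k) * (ρ * ε') := by linarith
        _ = ε' + (1 - ρ * γ (T1+k)) * (P k * C) := by ring
        _ = ε' + P (k+1) * C := by rw [hPk]; ring
  -- P k → 0
  have hPexp : ∀ k, P k ≤ Real.exp (-(ρ * ∑ j ∈ range k, γ (T1 + j))) := by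
    intro k
    have : ∀ j ∈ range k, (1 - ρ * γ (T1 + j)) ≤ Real.exp (-(ρ * γ (T1 + j))) := by
      intro j _
      have := Real.add_one_le_exp (-(ρ * γ (T1 + j)))
      linarith
    calc P k ≤ ∏ j ∈ range k, Real.exp (-(ρ * γ (T1 + j))) :=
          prod_le_prod (fun j _ => hfac j) this
      _ = Real.exp (∑ j ∈ range k, -(ρ * γ (T1 + j))) := by rw [Real.exp_sum]
      _ = Real.exp (-(ρ * ∑ j ∈ range k, γ (T1 + j))) := by
          congr 1
          rw [Finset.mul_sum, ← Finset.sum_neg_distrib]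
  have hsumdiv : Tendsto (fun k => ∑ j ∈ range k, γ (T1 + j)) atTop atTop := by
    have h1 : Tendsto (fun k => ∑ t ∈ range (k + T1), γ t) atTop atTop :=
      hγdiv.comp (tendsto_add_atTop_nat T1)
    have h2 : ∀ k, ∑ j ∈ range k, γ (T1 + j) = ∑ t ∈ range (k + T1), γ t - ∑ t ∈ range T1, γ t := by
      intro k; rw [Nat.add_comm k T1, Finset.sum_range_add]; ring
    simp only [h2]
    exact h1.atTop_add tendsto_const_nhds
  have hPlim : Tendsto P atTop (nhds 0) := by
    have hexp : Tendsto (fun k => Real.exp (-(ρ * ∑ j ∈ range k, γ (T1 + j)))) atTop (nhds 0) := by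
      apply Real.tendsto_exp_atBot.comp
      exact tendsto_neg_atBot_iff.2 (hsumdiv.const_mul_atTop hρ)
    exact squeeze_zero hP0 hPexp hexp
  have hPC : Tendsto (fun k => ε' + P k * C) atTop (nhds ε') := by
    have := (hPlim.mul_const C)
    simpa using tendsto_const_nhds.add this
  have hev : ∀ᶠ k in atTop, ε' + P k * C < ε :=
    hPC.eventually (eventually_lt_nhds (show ε' < ε by rw [hε']; linarith))
  rw [eventually_atTop] at hev
  obtain ⟨K, hK⟩ := hev
  rw [eventually_atTop]
  refine ⟨T1 + K, fun t ht => ?_⟩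
  obtain ⟨k, rfl⟩ := Nat.exists_eq_add_of_le (le_trans (Nat.le_add_right T1 K) ht)
  have hk : K ≤ k := by omega
  exact lt_of_le_of_lt (key k) (hK k hk)

lemma indep_L2_series_ae_converges {Ω : Type*} [MeasurableSpace Ω] {μ : Measure Ω}
    [IsProbabilityMeasure μ] (X : ℕ → Ω → ℝ) (hmeas : ∀ t, Measurable (X t))
    (hindep : iIndepFun X μ)
    (hint2 : ∀ t, Integrable (fun ω => X t ω ^ 2) μ)
    (hmean : ∀ t, ∫ ω, X t ω ∂μ = 0)
    {C : ℝ} (hvar : ∀ T, ∑ t ∈ Finset.range T, ∫ ω, X t ω ^ 2 ∂μ ≤ C) :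
    ∀ᵐ ω ∂μ, ∃ l, Tendsto (fun T => ∑ t ∈ Finset.range T, X t ω) atTop (nhds l) := by
  have hmem2 : ∀ t, MemLp (X t) 2 μ := fun t =>
    (memLp_two_iff_integrable_sq (hmeas t).aestronglyMeasurable).2 (hint2 t)
  have hint : ∀ t, Integrable (X t) μ := fun t =>
    memLp_one_iff_integrable.1 ((hmem2 t).mono_exponent one_le_two)
  set g : ℕ → Ω → ℝ := fun T ω => ∑ t ∈ range (T + 1), X t ω with hg
  have hgmeas : ∀ T, Measurable (g T) := fun T =>
    Finset.measurable_sum _ fun t _ => hmeas t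
  have hgmem2 : ∀ T, MemLp (g T) 2 μ := by
    intro T
    have h := memLp_finsetSum (range (T+1)) (fun t _ => hmem2 t)
    exact h
  have hgsqint : ∀ T, Integrable (fun ω => g T ω ^ 2) μ := fun T =>
    (memLp_two_iff_integrable_sq (hgmeas T).aestronglyMeasurable).1 (hgmem2 T)
  set ℱ := Filtration.natural X (fun t => (hmeas t).stronglyMeasurable) with hℱ
  have hcomap_le : ∀ t T, t ≤ T → MeasurableSpace.comap (X t) inferInstance ≤ ℱ T := by
    intro t T htT
    have h : ℱ T = ⨆ j ≤ T, MeasurableSpace.comap (X j) inferInstance := rfl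
    rw [h]
    exact le_iSup₂ (f := fun j (_ : j ≤ T) => MeasurableSpace.comap (X j) inferInstance) t htT
  have hXmeas_comap : ∀ t, Measurable[MeasurableSpace.comap (X t) inferInstance] (X t) :=
    fun t => measurable_iff_comap_le.2 le_rfl
  have hadp : StronglyAdapted ℱ g := by
    intro T
    apply Finset.stronglyMeasurable_fun_sum
    intro t ht
    rw [Finset.mem_range, Nat.lt_succ_iff] at ht
    exact ((hXmeas_comap t).mono (hcomap_le t T ht) le_rfl).stronglyMeasurable
  have hgint : ∀ T, Integrable (g T) μ := fun T => integrable_finset_sum _ fun t _ => hint t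
  have hmart : Martingale g ℱ μ := by
    apply martingale_nat hadp hgint
    intro i
    have hsplit : g (i + 1) = g i + X (i + 1) := by
      funext ω
      simp only [hg, Pi.add_apply]
      exact Finset.sum_range_succ _ _
    have hadd : μ[g (i+1)|ℱ i] =ᵐ[μ] μ[g i|ℱ i] + μ[X (i+1)|ℱ i] := by
      rw [hsplit]; exact condExp_add (hgint i) (hint (i+1)) _
    have h1 : μ[g i|ℱ i] = g i := condExp_of_stronglyMeasurable (ℱ.le i) (hadp i) (hgint i)
    have hindep2 : Indep (MeasurableSpace.comap (X (i+1)) inferInstance) (ℱ i) μ := by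
      have hdisj : Disjoint ({i+1} : Set ℕ) {j | j ≤ i} := by
        rw [Set.disjoint_left]; rintro a rfl; simp
      have h2 := indep_iSup_of_disjoint (fun j => (hmeas j).comap_le) ((iIndepFun_iff_iIndep (fun _ => inferInstance) X μ).1 hindep) hdisj
      have h3 : ℱ i = ⨆ j ≤ i, MeasurableSpace.comap (X j) inferInstance := rfl
      rw [h3]
      simpa [_root_.iSup_singleton] using h2
    have h2 : μ[X (i+1)|ℱ i] =ᵐ[μ] fun _ => ∫ ω, X (i+1) ω ∂μ :=
      condExp_indep_eq (hmeas (i+1)).comap_le (ℱ.le i)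
        ((hXmeas_comap (i+1)).stronglyMeasurable) hindep2
    have h2' : μ[X (i+1)|ℱ i] =ᵐ[μ] 0 := by
      rw [hmean (i+1)] at h2; exact h2
    filter_upwards [hadd, h2'] with ω hω hω2
    simp [hω, h1, hω2]
  have horth : ∀ T, ∫ ω, (g T ω) ^ 2 ∂μ ≤ C := by
    intro T
    have hprodint : ∀ s t : ℕ, Integrable (fun ω => X s ω * X t ω) μ := by
      intro s t
      rcases eq_or_ne s t with rfl | hst
      · simpa [pow_two] using hint2 s
      · exact (hindep.indepFun hst).integrable_mul (hint s) (hint t)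
    have hexp : ∀ ω, (g T ω) ^ 2 = ∑ s ∈ range (T+1), ∑ t ∈ range (T+1), X s ω * X t ω := by
      intro ω
      rw [pow_two, Finset.sum_mul_sum]
    have heq : ∫ ω, (g T ω) ^ 2 ∂μ
        = ∑ s ∈ range (T+1), ∑ t ∈ range (T+1), ∫ ω, X s ω * X t ω ∂μ := by
      simp_rw [hexp]
      rw [integral_finset_sum _ fun s _ => integrable_finset_sum _ fun t _ => hprodint s t]
      exact Finset.sum_congr rfl fun s _ => integral_finset_sum _ fun t _ => hprodint s t
    rw [heq]
    have hdiag : ∀ s ∈ range (T+1),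
        ∑ t ∈ range (T+1), ∫ ω, X s ω * X t ω ∂μ = ∫ ω, X s ω ^ 2 ∂μ := by
      intro s hs
      rw [Finset.sum_eq_single_of_mem s hs]
      · simp [pow_two]
      · intro t _ hts
        have h0 : ∫ ω, X s ω * X t ω ∂μ = (∫ ω, X s ω ∂μ) * ∫ ω, X t ω ∂μ :=
          (hindep.indepFun (Ne.symm hts)).integral_mul_eq_mul_integral (hmeas s).aestronglyMeasurable
            (hmeas t).aestronglyMeasurable
        rw [h0, hmean s, hmean t]; ring
    rw [Finset.sum_congr rfl hdiag]
    exact hvar (T+1)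
  set R : NNReal := ((1 + max C 0) / 2).toNNReal with hR
  have hbdd : ∀ T, eLpNorm (g T) 1 μ ≤ (R : ENNReal) := by
    intro T
    have habs : ∫ ω, ‖g T ω‖ ∂μ ≤ (1 + max C 0) / 2 := by
      have hptw : ∀ ω, ‖g T ω‖ ≤ (1 + (g T ω) ^ 2) / 2 := by
        intro ω
        rw [Real.norm_eq_abs]
        nlinarith [sq_abs (g T ω), sq_nonneg (|g T ω| - 1)]
      calc ∫ ω, ‖g T ω‖ ∂μ ≤ ∫ ω, (1 + (g T ω) ^ 2) / 2 ∂μ := by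
            apply integral_mono (hgint T).norm _ hptw
            exact ((integrable_const 1).add (hgsqint T)).div_const 2
        _ = (1 + ∫ ω, (g T ω)^2 ∂μ) / 2 := by
            rw [integral_div, integral_add (integrable_const 1) (hgsqint T)]
            simp [measure_univ]
        _ ≤ (1 + max C 0) / 2 := by
            have := le_trans (horth T) (le_max_left C 0)
            linarith
    have h1 : eLpNorm (g T) 1 μ = ENNReal.ofReal (∫ ω, ‖g T ω‖ ∂μ) := by
      rw [eLpNorm_one_eq_lintegral_enorm,
        ← ofReal_integral_norm_eq_lintegral_enorm (hgint T)]
    rw [h1, hR]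
    exact le_trans (ENNReal.ofReal_le_ofReal habs) le_rfl
  have hconv := hmart.submartingale.exists_ae_tendsto_of_bdd hbdd
  filter_upwards [hconv] with ω hω
  obtain ⟨c, hc⟩ := hω
  refine ⟨c, ?_⟩
  rw [← tendsto_add_atTop_iff_nat 1]
  exact hc

variable {n : ℕ}

lemma sum_mulVec' {ι : Type*} (s : Finset ι) (M : ι → Matrix (Fin n) (Fin n) ℝ) (x : Fin n → ℝ) :
    (∑ i ∈ s, M i) *ᵥ x = ∑ i ∈ s, (M i *ᵥ x) := by
  ext q
  simp only [Matrix.mulVec, dotProduct, Finset.sum_apply, Matrix.sum_apply,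
    Finset.sum_mul]
  rw [Finset.sum_comm]

lemma enorm_sq_eq (z : EuclideanSpace ℝ (Fin n)) : ‖z‖ ^ 2 = ∑ q, z q ^ 2 := by
  rw [EuclideanSpace.norm_eq, Real.sq_sqrt]
  · simp [Real.norm_eq_abs, sq_abs]
  · positivity

-- the mulVec continuous linear map on Euclidean space
noncomputable def mulVecCLM (G : Matrix (Fin n) (Fin n) ℝ) :
    EuclideanSpace ℝ (Fin n) →L[ℝ] EuclideanSpace ℝ (Fin n) :=
  LinearMap.toContinuousLinearMap
    { toFun := fun z => (WithLp.toLp 2 (G *ᵥ (z : Fin n → ℝ)) : EuclideanSpace ℝ (Fin n))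
      map_add' := fun a b => by ext q; simp [Matrix.mulVec_add]
      map_smul' := fun c a => by ext q; simp [Matrix.mulVec_smul] }

@[simp] lemma mulVecCLM_apply (G : Matrix (Fin n) (Fin n) ℝ) (z : EuclideanSpace ℝ (Fin n))
    (q : Fin n) : mulVecCLM G z q = (G *ᵥ (z : Fin n → ℝ)) q := rfl

lemma posdef_lam_bound (hn : 0 < n) (G : Matrix (Fin n) (Fin n) ℝ) (hG : G.PosDef) :
    ∃ lam > 0, ∀ z : EuclideanSpace ℝ (Fin n),
      lam * ‖z‖ ^ 2 ≤ (z : Fin n → ℝ) ⬝ᵥ (G *ᵥ (z : Fin n → ℝ)) := by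
  haveI : Nonempty (Fin n) := ⟨⟨0, hn⟩⟩
  haveI : Nontrivial (EuclideanSpace ℝ (Fin n)) := by
    refine ⟨0, EuclideanSpace.single ⟨0, hn⟩ 1, ?_⟩
    intro h
    have := congrFun (congrArg (fun (z : EuclideanSpace ℝ (Fin n)) => (z : Fin n → ℝ)) h) ⟨0, hn⟩
    simp at this
  set f : EuclideanSpace ℝ (Fin n) → ℝ := fun z => (z : Fin n → ℝ) ⬝ᵥ (G *ᵥ (z : Fin n → ℝ))
  have hfc : Continuous f := by
    show Continuous fun z : EuclideanSpace ℝ (Fin n) =>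
      ∑ q, (z : Fin n → ℝ) q * ∑ j, G q j * (z : Fin n → ℝ) j
    apply continuous_finset_sum
    intro q _
    apply Continuous.mul
    · exact (EuclideanSpace.proj q).continuous
    · apply continuous_finset_sum
      intro j _
      exact continuous_const.mul (EuclideanSpace.proj j).continuous
  have hsph : (Metric.sphere (0 : EuclideanSpace ℝ (Fin n)) 1).Nonempty :=
    NormedSpace.sphere_nonempty.2 zero_le_one
  obtain ⟨z0, hz0mem, hz0min⟩ :=
    (isCompact_sphere (0 : EuclideanSpace ℝ (Fin n)) 1).exists_isMinOn hsph hfc.continuousOn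
  have hz0norm : ‖z0‖ = 1 := by simpa using hz0mem
  have hz0ne : z0 ≠ 0 := by
    intro h; rw [h] at hz0norm; simp at hz0norm
  have hlam_pos : 0 < f z0 := by
    have := hG.dotProduct_mulVec_pos (x := (z0 : Fin n → ℝ)) ?_
    · simpa using this
    · intro h
      apply hz0ne
      ext q
      exact congrFun h q
  refine ⟨f z0, hlam_pos, fun z => ?_⟩
  rcases eq_or_ne z 0 with rfl | hz
  · simp [f, dotProduct]
  · have hznorm : 0 < ‖z‖ := norm_pos_iff.2 hz
    set w : EuclideanSpace ℝ (Fin n) := ‖z‖⁻¹ • z with hw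
    have hwmem : w ∈ Metric.sphere (0 : EuclideanSpace ℝ (Fin n)) 1 := by
      simp [hw, norm_smul, abs_of_nonneg (inv_nonneg.2 hznorm.le), inv_mul_cancel₀ hznorm.ne']
    have hmin : f z0 ≤ f w := hz0min hwmem
    have hsc : ∀ (c : ℝ) (y : Fin n → ℝ), (c • y) ⬝ᵥ (G *ᵥ (c • y)) = c ^ 2 * (y ⬝ᵥ (G *ᵥ y)) := by
      intro c y
      rw [Matrix.mulVec_smul, smul_dotProduct, dotProduct_smul]
      simp [smul_eq_mul]; ring
    have hfw : f w = ‖z‖⁻¹ ^ 2 * f z := hsc ‖z‖⁻¹ (z : Fin n → ℝ)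
    rw [hfw] at hmin
    show f z0 * ‖z‖ ^ 2 ≤ f z
    have h2 : f z0 * ‖z‖ ^ 2 ≤ (‖z‖⁻¹ ^ 2 * f z) * ‖z‖ ^ 2 :=
      mul_le_mul_of_nonneg_right hmin (by positivity)
    calc f z0 * ‖z‖ ^ 2 ≤ (‖z‖⁻¹ ^ 2 * f z) * ‖z‖ ^ 2 := h2
      _ = f z := by field_simp
  
lemma contraction_bound (G : Matrix (Fin n) (Fin n) ℝ) {lam K c : ℝ}
    (hlam_pos : 0 < lam)
    (hlam : ∀ z : EuclideanSpace ℝ (Fin n),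
      lam * ‖z‖ ^ 2 ≤ (z : Fin n → ℝ) ⬝ᵥ (G *ᵥ (z : Fin n → ℝ)))
    (hK : ∀ z : EuclideanSpace ℝ (Fin n), ‖mulVecCLM G z‖ ≤ K * ‖z‖)
    (hc0 : 0 ≤ c) (hcK : c * K ^ 2 ≤ lam) (hclam : c * lam ≤ 1)
    (z : EuclideanSpace ℝ (Fin n)) :
    ‖z - c • mulVecCLM G z‖ ≤ (1 - c * lam / 2) * ‖z‖ := by
  set g := mulVecCLM G z with hg
  have hexp : ‖z - c • g‖ ^ 2
      = ‖z‖ ^ 2 - 2 * c * ((z : Fin n → ℝ) ⬝ᵥ (G *ᵥ (z : Fin n → ℝ))) + c ^ 2 * ‖g‖ ^ 2 := by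
    rw [enorm_sq_eq, enorm_sq_eq, enorm_sq_eq]
    have happ : ∀ q, (z - c • g) q = z q - c * g q := fun q => rfl
    have hdot : (z : Fin n → ℝ) ⬝ᵥ (G *ᵥ (z : Fin n → ℝ)) = ∑ q, z q * g q := rfl
    simp only [happ]
    rw [hdot, Finset.mul_sum, Finset.mul_sum, ← Finset.sum_sub_distrib,
      ← Finset.sum_add_distrib]
    apply Finset.sum_congr rfl
    intro q _
    ring
  have hub : ‖z - c • g‖ ^ 2 ≤ (1 - c * lam) * ‖z‖ ^ 2 := by
    rw [hexp]
    have h1 := hlam z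
    have h2 : ‖g‖ ^ 2 ≤ K ^ 2 * ‖z‖ ^ 2 := by
      have := hK z
      nlinarith [norm_nonneg (mulVecCLM G z), norm_nonneg z]
    have hd : c * (lam * ‖z‖ ^ 2) ≤ c * ((z : Fin n → ℝ) ⬝ᵥ (G *ᵥ (z : Fin n → ℝ))) :=
      mul_le_mul_of_nonneg_left h1 hc0
    have hg2 : c ^ 2 * ‖g‖ ^ 2 ≤ c ^ 2 * (K ^ 2 * ‖z‖ ^ 2) :=
      mul_le_mul_of_nonneg_left h2 (sq_nonneg c)
    have hck : c * (c * K ^ 2) * ‖z‖ ^ 2 ≤ c * lam * ‖z‖ ^ 2 :=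
      mul_le_mul_of_nonneg_right (mul_le_mul_of_nonneg_left hcK hc0) (sq_nonneg _)
    nlinarith [hd, hg2, hck]
  have hrhs0 : 0 ≤ 1 - c * lam / 2 := by nlinarith
  have hsq : ((1 - c * lam / 2) * ‖z‖) ^ 2 = (1 - c * lam + (c * lam) ^ 2 / 4) * ‖z‖ ^ 2 := by ring
  have h3 : ‖z - c • g‖ ^ 2 ≤ ((1 - c * lam / 2) * ‖z‖) ^ 2 := by
    rw [hsq]
    have : (1 - c * lam) * ‖z‖ ^ 2 ≤ (1 - c * lam + (c * lam) ^ 2 / 4) * ‖z‖ ^ 2 := by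
      nlinarith [sq_nonneg ‖z‖, sq_nonneg (c * lam)]
    linarith
  have h4 := Real.sqrt_le_sqrt h3
  rwa [Real.sqrt_sq (norm_nonneg _), Real.sqrt_sq (by positivity)] at h4

lemma sq_le_one_add_rpow {ε : ℝ} (hε : 0 < ε) (a : ℝ) (ha : 0 ≤ a) :
    a ^ 2 ≤ 1 + a ^ (2 + ε) := by
  rcases le_total a 1 with h | h
  · have h1 : a ^ 2 ≤ 1 := by nlinarith
    have h2 : 0 ≤ a ^ (2 + ε) := Real.rpow_nonneg ha _
    linarith
  · have h1 : a ^ (2:ℝ) ≤ a ^ (2 + ε) :=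
      Real.rpow_le_rpow_of_exponent_le h (by linarith)
    rw [show (2:ℝ) = ((2:ℕ):ℝ) by norm_num, Real.rpow_natCast] at h1
    push_cast at h1
    have h3 : (0:ℝ) ≤ a ^ (2+ε) := Real.rpow_nonneg ha _
    linarith

theorem centralized_estimator_strongly_consistent
    {N n : ℕ} (hN : 0 < N) (m : Fin N → ℕ)
    (H : ∀ i : Fin N, Matrix (Fin (m i)) (Fin n) ℝ)
    (hG : (∑ i : Fin N, (H i)ᵀ * H i).PosDef)
    (θ : Fin n → ℝ)
    {Ω : Type*} [MeasurableSpace Ω] (μ : MeasureTheory.Measure Ω)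
    [IsProbabilityMeasure μ]
    (v : ℕ → Ω → ∀ i : Fin N, Fin (m i) → ℝ)
    (hvmeas : ∀ t, Measurable (v t))
    (hviid : ProbabilityTheory.iIndepFun v μ)
    (hvident : ∀ t, Measure.map (v t) μ = Measure.map (v 0) μ)
    (hvmean : ∀ t, Integrable (v t) μ ∧ ∫ ω, v t ω ∂μ = 0)
    -- finite (2+ε)-moments
    (ε : ℝ) (hε : 0 < ε)
    (hmom : ∀ t, Integrable (fun ω => ‖v t ω‖ ^ (2 + ε)) μ)
    (ac τc : ℝ) (hac : 0 < ac) (hτc : 1 / 2 < τc) (hτc' : τc ≤ 1)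
    (u : ℕ → Ω → EuclideanSpace ℝ (Fin n))
    -- the centralized estimator recursion, with y i t = H i θ + v i t
    (hrec : ∀ (t : ℕ) (ω : Ω) (q : Fin n),
      u (t + 1) ω q =
        u t ω q + (ac / ((t : ℝ) + 1) ^ τc / (N : ℝ)) *
          (∑ i : Fin N,
            ((H i)ᵀ *ᵥ (H i *ᵥ θ + v t ω i - H i *ᵥ fun r => u t ω r)) q)) :
    ∀ᵐ ω ∂μ, Tendsto (fun t : ℕ => u t ω) atTop (nhds (WithLp.toLp 2 (fun q => θ q) : EuclideanSpace ℝ (Fin n))) := by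
  classical
  rcases Nat.eq_zero_or_pos n with hn0 | hn
  · haveI : Subsingleton (EuclideanSpace ℝ (Fin n)) :=
      ⟨fun a b => PiLp.ext fun q => (hn0 ▸ q : Fin 0).elim0⟩
    refine Eventually.of_forall fun ω => ?_
    have heq : (fun t => u t ω) = fun _ => (WithLp.toLp 2 (fun q => θ q) : EuclideanSpace ℝ (Fin n)) := by
      funext t; exact Subsingleton.elim _ _
    rw [heq]; exact tendsto_const_nhds
  have hNpos : (0:ℝ) < (N:ℝ) := by exact_mod_cast hN
  set G : Matrix (Fin n) (Fin n) ℝ := ∑ i : Fin N, (H i)ᵀ * H i with hGdef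
  set γ : ℕ → ℝ := fun t => ac / ((t:ℝ) + 1) ^ τc with hγdef
  have hγpos : ∀ t, 0 < γ t := fun t =>
    div_pos hac (Real.rpow_pos_of_pos (by positivity) _)
  have hpow_top : Tendsto (fun t : ℕ => ((t:ℝ) + 1) ^ τc) atTop atTop := by
    apply (tendsto_rpow_atTop (by linarith : (0:ℝ) < τc)).comp
    exact tendsto_atTop_add_const_right atTop 1 tendsto_natCast_atTop_atTop
  have hγ0 : Tendsto γ atTop (nhds 0) := by
    simpa using Tendsto.div_atTop (tendsto_const_nhds (x := ac)) hpow_top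
  have hγdiv : Tendsto (fun T => ∑ t ∈ Finset.range T, γ t) atTop atTop := by
    have hlow : ∀ t : ℕ, ac * (1 / ((t:ℝ) + 1)) ≤ γ t := by
      intro t
      have h1 : (1:ℝ) ≤ (t:ℝ) + 1 := by
        have := Nat.cast_nonneg (α := ℝ) t; linarith
      have h2 : ((t:ℝ) + 1) ^ τc ≤ (t:ℝ) + 1 := by
        calc ((t:ℝ) + 1) ^ τc ≤ ((t:ℝ) + 1) ^ (1:ℝ) :=
              Real.rpow_le_rpow_of_exponent_le h1 hτc'
          _ = (t:ℝ) + 1 := Real.rpow_one _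
      have h3 : (0:ℝ) < ((t:ℝ) + 1) ^ τc := Real.rpow_pos_of_pos (by positivity) _
      rw [mul_one_div]
      exact div_le_div_of_nonneg_left hac.le h3 h2
    apply tendsto_atTop_mono (fun T => ?_)
      ((Real.tendsto_sum_range_one_div_nat_succ_atTop.const_mul_atTop hac))
    rw [Finset.mul_sum]
    exact Finset.sum_le_sum fun t _ => hlow t
  -- sum of squares bound
  have h2τ : (1:ℝ) < 2 * τc := by linarith
  have hsummable : Summable (fun t : ℕ => 1 / ((t:ℝ) + 1) ^ (2 * τc)) := by
    have h := (summable_nat_add_iff 1).2 (Real.summable_one_div_nat_rpow.2 h2τ)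
    simpa using h
  set S : ℝ := ac ^ 2 * ∑' t : ℕ, 1 / ((t:ℝ) + 1) ^ (2 * τc) with hSdef
  have hγsq : ∀ T, ∑ t ∈ Finset.range T, (γ t) ^ 2 ≤ S := by
    intro T
    have heach : ∀ t : ℕ, (γ t) ^ 2 = ac ^ 2 * (1 / ((t:ℝ) + 1) ^ (2 * τc)) := by
      intro t
      have hb : (0:ℝ) ≤ (t:ℝ) + 1 := by positivity
      have h1 : (((t:ℝ) + 1) ^ τc) ^ (2:ℕ) = ((t:ℝ) + 1) ^ (2 * τc) := by
        rw [← Real.rpow_natCast (((t:ℝ) + 1) ^ τc) 2, ← Real.rpow_mul hb]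
        norm_num [mul_comm]
      show (ac / ((t:ℝ) + 1) ^ τc) ^ 2 = ac ^ 2 * (1 / ((t:ℝ) + 1) ^ (2 * τc))
      rw [div_pow, h1, div_eq_mul_one_div]
    calc ∑ t ∈ Finset.range T, γ t ^ 2
        = ∑ t ∈ Finset.range T, ac ^ 2 * (1 / ((t:ℝ) + 1) ^ (2 * τc)) :=
          Finset.sum_congr rfl fun t _ => heach t
      _ = ac ^ 2 * ∑ t ∈ Finset.range T, 1 / ((t:ℝ) + 1) ^ (2 * τc) := by
          rw [Finset.mul_sum]
      _ ≤ S := by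
          apply mul_le_mul_of_nonneg_left _ (sq_nonneg ac)
          exact hsummable.sum_le_tsum _ (fun t _ => by positivity)
  -- the noise coordinate functionals
  let Φ : Fin n → ((∀ i : Fin N, Fin (m i) → ℝ) →L[ℝ] ℝ) := fun q =>
    LinearMap.toContinuousLinearMap
      { toFun := fun x => ∑ i, ((H i)ᵀ *ᵥ x i) q
        map_add' := fun a b => by
          simp [Matrix.mulVec_add, Finset.sum_add_distrib]
        map_smul' := fun c a => by
          simp [Matrix.mulVec_smul, Finset.mul_sum] }
  have hΦapply : ∀ q x, Φ q x = ∑ i, ((H i)ᵀ *ᵥ x i) q := fun q x => by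
    simp [Φ, LinearMap.coe_toContinuousLinearMap']
  have hΦmeas : ∀ q t, Measurable (fun ω => Φ q (v t ω)) :=
    fun q t => ((Φ q).continuous.measurable).comp (hvmeas t)
  -- the coordinate noise processes
  set X : Fin n → ℕ → Ω → ℝ := fun q t ω => (γ t / (N:ℝ)) * Φ q (v t ω) with hXdef
  have hXmeas : ∀ q t, Measurable (X q t) := fun q t => (hΦmeas q t).const_mul _
  have hΦsq_bound : ∀ q t ω, (Φ q (v t ω)) ^ 2 ≤ ‖Φ q‖ ^ 2 * (1 + ‖v t ω‖ ^ (2 + ε)) := by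
    intro q t ω
    have h1 : |Φ q (v t ω)| ≤ ‖Φ q‖ * ‖v t ω‖ := by
      rw [← Real.norm_eq_abs]; exact (Φ q).le_opNorm _
    have h2 : (Φ q (v t ω)) ^ 2 ≤ (‖Φ q‖ * ‖v t ω‖) ^ 2 := by
      rw [← sq_abs]
      exact pow_le_pow_left₀ (abs_nonneg _) h1 2
    have h3 : ‖v t ω‖ ^ 2 ≤ 1 + ‖v t ω‖ ^ (2 + ε) := sq_le_one_add_rpow hε _ (norm_nonneg _)
    calc (Φ q (v t ω)) ^ 2 ≤ (‖Φ q‖ * ‖v t ω‖) ^ 2 := h2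
      _ = ‖Φ q‖ ^ 2 * ‖v t ω‖ ^ 2 := by ring
      _ ≤ ‖Φ q‖ ^ 2 * (1 + ‖v t ω‖ ^ (2 + ε)) :=
          mul_le_mul_of_nonneg_left h3 (sq_nonneg _)
  have hΦsqint : ∀ q t, Integrable (fun ω => (Φ q (v t ω)) ^ 2) μ := by
    intro q t
    apply Integrable.mono (((integrable_const (1:ℝ)).add (hmom t)).const_mul (‖Φ q‖ ^ 2))
      (((hΦmeas q t).pow_const 2).aestronglyMeasurable)
    apply Eventually.of_forall
    intro ω
    have hnn : (0:ℝ) ≤ ‖v t ω‖ ^ (2 + ε) := Real.rpow_nonneg (norm_nonneg _) _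
    simp only [Pi.add_apply, Real.norm_eq_abs]
    rw [abs_of_nonneg (sq_nonneg _),
      abs_of_nonneg (mul_nonneg (sq_nonneg ‖Φ q‖) (by linarith))]
    exact hΦsq_bound q t ω
  have hXint2 : ∀ q t, Integrable (fun ω => (X q t ω) ^ 2) μ := by
    intro q t
    have h := (hΦsqint q t).const_mul ((γ t / (N:ℝ)) ^ 2)
    apply h.congr
    apply Eventually.of_forall
    intro ω
    simp [hXdef, mul_pow]
  have hXindep : ∀ q, iIndepFun (X q) μ := by
    intro q
    exact hviid.comp (fun t y => (γ t / (N:ℝ)) * Φ q y)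
      (fun t => ((Φ q).continuous.measurable).const_mul _)
  have hXmean : ∀ q t, ∫ ω, X q t ω ∂μ = 0 := by
    intro q t
    have h1 : ∫ ω, X q t ω ∂μ = (γ t / (N:ℝ)) * ∫ ω, Φ q (v t ω) ∂μ := by
      rw [hXdef]; exact integral_const_mul _ _
    rw [h1, ContinuousLinearMap.integral_comp_comm _ (hvmean t).1, (hvmean t).2]
    simp
  -- identical second moments
  have hMq : ∀ q t, ∫ ω, (Φ q (v t ω)) ^ 2 ∂μ = ∫ ω, (Φ q (v 0 ω)) ^ 2 ∂μ := by
    intro q t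
    have hcont : Continuous (fun y => (Φ q y) ^ 2) := (Φ q).continuous.pow 2
    rw [← integral_map (hvmeas t).aemeasurable hcont.aestronglyMeasurable, hvident t,
      integral_map (hvmeas 0).aemeasurable hcont.aestronglyMeasurable]
  have hXvar : ∀ q T, ∑ t ∈ Finset.range T, ∫ ω, (X q t ω) ^ 2 ∂μ
      ≤ S * ((∫ ω, (Φ q (v 0 ω)) ^ 2 ∂μ) / (N:ℝ) ^ 2) := by
    intro q T
    have hM0 : 0 ≤ ∫ ω, (Φ q (v 0 ω)) ^ 2 ∂μ := integral_nonneg fun ω => sq_nonneg _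
    have heach : ∀ t, ∫ ω, (X q t ω) ^ 2 ∂μ
        = (γ t) ^ 2 * ((∫ ω, (Φ q (v 0 ω)) ^ 2 ∂μ) / (N:ℝ) ^ 2) := by
      intro t
      have h1 : (fun ω => (X q t ω) ^ 2) = fun ω => (γ t / (N:ℝ)) ^ 2 * (Φ q (v t ω)) ^ 2 := by
        funext ω; simp [hXdef, mul_pow]
      rw [h1, integral_const_mul, hMq q t, div_pow]
      ring
    calc ∑ t ∈ Finset.range T, ∫ ω, (X q t ω) ^ 2 ∂μ
        = (∑ t ∈ Finset.range T, (γ t) ^ 2) * ((∫ ω, (Φ q (v 0 ω)) ^ 2 ∂μ) / (N:ℝ) ^ 2) := by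
          rw [Finset.sum_mul]
          exact Finset.sum_congr rfl fun t _ => heach t
      _ ≤ S * ((∫ ω, (Φ q (v 0 ω)) ^ 2 ∂μ) / (N:ℝ) ^ 2) :=
          mul_le_mul_of_nonneg_right (hγsq T) (by positivity)
  -- a.s. convergence of the coordinate noise series
  have hae : ∀ᵐ ω ∂μ, ∀ q : Fin n,
      ∃ l, Tendsto (fun T => ∑ t ∈ Finset.range T, X q t ω) atTop (nhds l) := by
    rw [ae_all_iff]
    intro q
    exact indep_L2_series_ae_converges (X q) (hXmeas q) (hXindep q) (hXint2 q)
      (hXmean q) (hXvar q)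
  -- contraction constants
  obtain ⟨lam, hlam_pos, hlam⟩ := posdef_lam_bound hn G hG
  set K : ℝ := ‖mulVecCLM G‖ with hKdef
  have hK : ∀ z : EuclideanSpace ℝ (Fin n), ‖mulVecCLM G z‖ ≤ K * ‖z‖ :=
    fun z => (mulVecCLM G).le_opNorm z
  have hK0 : 0 ≤ K := norm_nonneg _
  set ρ : ℝ := lam / (2 * (N:ℝ)) with hρdef
  have hρpos : 0 < ρ := by positivity
  have hev1 : ∀ᶠ t in atTop, γ t / (N:ℝ) * K ^ 2 ≤ lam := by
    have hlim : Tendsto (fun t => γ t / (N:ℝ) * K ^ 2) atTop (nhds 0) := by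
      have := (hγ0.div_const (N:ℝ)).mul_const (K ^ 2)
      simpa using this
    exact hlim.eventually (eventually_le_nhds hlam_pos)
  have hev2 : ∀ᶠ t in atTop, γ t / (N:ℝ) * lam ≤ 1 := by
    have hlim : Tendsto (fun t => γ t / (N:ℝ) * lam) atTop (nhds 0) := by
      have := (hγ0.div_const (N:ℝ)).mul_const lam
      simpa using this
    exact hlim.eventually (eventually_le_nhds one_pos)
  -- main part
  filter_upwards [hae] with ω hω
  choose lfun hl using hω
  set d : ℕ → EuclideanSpace ℝ (Fin n) := fun t => WithLp.toLp 2 (fun q => X q t ω) with hddef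
  set sp : ℕ → EuclideanSpace ℝ (Fin n) :=
    fun T => WithLp.toLp 2 (fun q => ∑ t ∈ Finset.range T, X q t ω) with hspdef
  set l : EuclideanSpace ℝ (Fin n) := WithLp.toLp 2 (fun q => lfun q) with hldef
  have hsE : Tendsto sp atTop (nhds l) := by
    let eqv := PiLp.continuousLinearEquiv 2 ℝ (fun _ : Fin n => ℝ)
    have h1 : Tendsto (fun T => eqv (sp T)) atTop (nhds (eqv l)) :=
      tendsto_pi_nhds.2 fun q => hl q
    have h2 := ((eqv.symm : (Fin n → ℝ) →L[ℝ] EuclideanSpace ℝ (Fin n)).continuous.tendsto _).comp h1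
    simpa [Function.comp_def] using h2
  set e : ℕ → EuclideanSpace ℝ (Fin n) := fun t => WithLp.toLp 2 (fun q => u t ω q - θ q) with hedef
  -- the recursion in Euclidean space
  have he : ∀ t, e (t+1) = e t - (γ t / (N:ℝ)) • mulVecCLM G (e t) + d t := by
    intro t
    ext q
    have happ : (e t - (γ t / (N:ℝ)) • mulVecCLM G (e t) + d t) q
        = e t q - (γ t / (N:ℝ)) * (G *ᵥ (e t : Fin n → ℝ)) q + d t q := rfl
    rw [happ]
    have hterm : ∀ i : Fin N, ((H i)ᵀ *ᵥ (H i *ᵥ θ + v t ω i - H i *ᵥ fun r => u t ω r)) q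
        = (((H i)ᵀ * H i) *ᵥ θ) q - (((H i)ᵀ * H i) *ᵥ fun r => u t ω r) q
          + ((H i)ᵀ *ᵥ v t ω i) q := by
      intro i
      rw [Matrix.mulVec_sub, Matrix.mulVec_add, Matrix.mulVec_mulVec, Matrix.mulVec_mulVec]
      simp [Pi.add_apply, Pi.sub_apply]
      ring
    have hsum : (∑ i : Fin N,
        ((H i)ᵀ *ᵥ (H i *ᵥ θ + v t ω i - H i *ᵥ fun r => u t ω r)) q)
        = (G *ᵥ θ) q - (G *ᵥ fun r => u t ω r) q + Φ q (v t ω) := by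
      rw [Finset.sum_congr rfl fun i _ => hterm i]
      rw [Finset.sum_add_distrib, Finset.sum_sub_distrib, hΦapply]
      congr 1
      congr 1
      · rw [hGdef, sum_mulVec', Finset.sum_apply]
      · rw [hGdef, sum_mulVec', Finset.sum_apply]
    have hGe : (G *ᵥ (e t : Fin n → ℝ)) q
        = (G *ᵥ fun r => u t ω r) q - (G *ᵥ θ) q := by
      have h1 : (e t : Fin n → ℝ) = (fun r => u t ω r) - θ := by
        funext r; simp [hedef]
      rw [h1, Matrix.mulVec_sub, Pi.sub_apply]
    have hdq : d t q = (γ t / (N:ℝ)) * Φ q (v t ω) := rfl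
    show u (t+1) ω q - θ q = _
    rw [hrec t ω q, hsum, hGe, hdq]
    ring
  -- tail of the noise series
  set r : ℕ → EuclideanSpace ℝ (Fin n) := fun t => l - sp t with hrdef
  have hr0 : Tendsto r atTop (nhds 0) := by
    have := tendsto_const_nhds (x := l) (f := atTop (α := ℕ)) |>.sub hsE
    simpa using this
  have hrd : ∀ t, r (t+1) = r t - d t := by
    intro t
    ext q
    show l q - sp (t+1) q = (l q - sp t q) - d t q
    have : sp (t+1) q = sp t q + d t q := Finset.sum_range_succ _ _
    rw [this]
    ring
  set y : ℕ → EuclideanSpace ℝ (Fin n) := fun t => e t + r t with hydef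
  have hy : ∀ t, y (t+1) = y t - (γ t / (N:ℝ)) • mulVecCLM G (y t)
      + (γ t / (N:ℝ)) • mulVecCLM G (r t) := by
    intro t
    have het : e t = y t - r t := by
      show e t = (e t + r t) - r t
      abel
    calc y (t+1) = e (t+1) + r (t+1) := rfl
      _ = (e t - (γ t / (N:ℝ)) • mulVecCLM G (e t) + d t) + (r t - d t) := by
          rw [he t, hrd t]
      _ = (e t + r t) - (γ t / (N:ℝ)) • mulVecCLM G (e t) := by abel
      _ = y t - (γ t / (N:ℝ)) • (mulVecCLM G (y t) - mulVecCLM G (r t)) := by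
          rw [het, map_sub]
          abel
      _ = y t - (γ t / (N:ℝ)) • mulVecCLM G (y t)
          + (γ t / (N:ℝ)) • mulVecCLM G (r t) := by
          rw [smul_sub]; abel
  -- norm recursion and conclusion
  have hδlim : Tendsto (fun t => (K / (N:ℝ)) * ‖r t‖) atTop (nhds 0) := by
    have h := (hr0.norm).const_mul (K / (N:ℝ))
    simpa using h
  have hnormrec : ∀ᶠ t in atTop,
      ‖y (t+1)‖ ≤ (1 - ρ * γ t) * ‖y t‖ + γ t * ((K / (N:ℝ)) * ‖r t‖) := by
    filter_upwards [hev1, hev2] with t h1 h2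
    have hc0 : 0 ≤ γ t / (N:ℝ) := by positivity
    have hcontr := contraction_bound G hlam_pos hlam hK hc0 h1 h2 (y t)
    have hstep : ‖y (t+1)‖ ≤ ‖y t - (γ t / (N:ℝ)) • mulVecCLM G (y t)‖
        + ‖(γ t / (N:ℝ)) • mulVecCLM G (r t)‖ := by
      rw [hy t]; exact norm_add_le _ _
    have hsm : ‖(γ t / (N:ℝ)) • mulVecCLM G (r t)‖ ≤ γ t * ((K / (N:ℝ)) * ‖r t‖) := by
      rw [norm_smul, Real.norm_eq_abs, abs_of_nonneg hc0]
      calc γ t / (N:ℝ) * ‖mulVecCLM G (r t)‖ ≤ γ t / (N:ℝ) * (K * ‖r t‖) :=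
            mul_le_mul_of_nonneg_left (hK (r t)) hc0
        _ = γ t * ((K / (N:ℝ)) * ‖r t‖) := by ring
    have heqc : 1 - (γ t / (N:ℝ)) * lam / 2 = 1 - ρ * γ t := by
      rw [hρdef]; field_simp
    calc ‖y (t+1)‖ ≤ ‖y t - (γ t / (N:ℝ)) • mulVecCLM G (y t)‖
        + ‖(γ t / (N:ℝ)) • mulVecCLM G (r t)‖ := hstep
      _ ≤ (1 - ρ * γ t) * ‖y t‖ + γ t * ((K / (N:ℝ)) * ‖r t‖) := by
          rw [← heqc]; exact add_le_add hcontr hsm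
  have hργ1 : ∀ᶠ t in atTop, ρ * γ t ≤ 1 := by
    filter_upwards [hev2] with t h2
    have heq2 : ρ * γ t = (γ t / (N:ℝ) * lam) / 2 := by rw [hρdef]; field_simp
    rw [heq2]; linarith
  have hynorm : Tendsto (fun t => ‖y t‖) atTop (nhds 0) :=
    recbound_tendsto_zero hρpos (fun t => (hγpos t).le) hργ1 hγdiv (fun t => norm_nonneg _)
      hδlim (fun t => by positivity) hnormrec
  have hyz : Tendsto y atTop (nhds 0) := tendsto_zero_iff_norm_tendsto_zero.2 hynorm
  have hez : Tendsto e atTop (nhds 0) := by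
    have h := hyz.sub hr0
    have heq : (fun t => y t - r t) = e := by
      funext t; show (e t + r t) - r t = e t; abel
    rw [heq] at h
    simpa using h
  set θE : EuclideanSpace ℝ (Fin n) := WithLp.toLp 2 (fun q => θ q) with hθE
  have hfin := hez.add_const θE
  have hueq : (fun t => e t + θE) = fun t => u t ω := by
    funext t
    ext q
    show (u t ω q - θ q) + θ q = u t ω q
    ring
  rw [hueq] at hfin
  simpa using hfin
end

section
/- Necessary-condition bound for triggering: suppose that between triggering instants the estimate increments satisfy ‖x_i(t+1) − x_i(t_k^i)‖ ≤ ‖x_i(t) − x_i(t_k^i)‖ + c6/(t+1)^{τ0+τ2} for all t ≥ t_k^i > T6, for constants c6 > 0, τ0 + τ2 > ρ0 > 0. If the next triggering occurs at t_{k+1}^i = t_k^i + L_k^i, i.e., ‖x_i(t_{k+1}^i) − x_i(t_k^i)‖ > 1/(t_{k+1}^i + 1)^{ρ0}, then necessarily (t_k^i + 1 + L_k^i)^{ρ0} · L_k^i / (t_k^i + 1)^{τ0+τ2} > 1/c6. -/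
theorem triggering_necessary_condition {n : ℕ}
    (x : ℕ → EuclideanSpace ℝ (Fin n))
    (tk Lk T6 : ℕ) (hL : 1 ≤ Lk) (hT6 : T6 < tk)
    (c6 τ0 τ2 ρ0 : ℝ) (hc6 : 0 < c6) (hρ0 : 0 < ρ0) (hττρ : ρ0 < τ0 + τ2)
    (hstep : ∀ t : ℕ, tk ≤ t →
      ‖x (t + 1) - x tk‖ ≤ ‖x t - x tk‖ + c6 / ((t : ℝ) + 1) ^ (τ0 + τ2))
    (htrig : 1 / (((tk : ℝ) + (Lk : ℝ)) + 1) ^ ρ0 < ‖x (tk + Lk) - x tk‖) :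
    ((tk : ℝ) + 1 + (Lk : ℝ)) ^ ρ0 * (Lk : ℝ) / ((tk : ℝ) + 1) ^ (τ0 + τ2)
      > 1 / c6 := by
  have hτ : (0:ℝ) < τ0 + τ2 := lt_trans hρ0 hττρ
  have htk1 : (0:ℝ) < (tk : ℝ) + 1 := by positivity
  have hA : (0:ℝ) < ((tk : ℝ) + 1) ^ (τ0 + τ2) := Real.rpow_pos_of_pos htk1 _
  have hB : (0:ℝ) < (((tk : ℝ) + (Lk : ℝ)) + 1) ^ ρ0 :=
    Real.rpow_pos_of_pos (by positivity) _
  -- key bound by induction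
  have key : ∀ m : ℕ, ‖x (tk + m) - x tk‖ ≤ (m : ℝ) * (c6 / ((tk : ℝ) + 1) ^ (τ0 + τ2)) := by
    intro m
    induction m with
    | zero => simp
    | succ m ih =>
      have hstep' := hstep (tk + m) (Nat.le_add_right _ _)
      have hden : ((tk : ℝ) + 1) ^ (τ0 + τ2) ≤ (((tk + m : ℕ) : ℝ) + 1) ^ (τ0 + τ2) := by
        apply Real.rpow_le_rpow (by positivity) _ (le_of_lt hτ)
        push_cast; linarith [Nat.cast_nonneg (α := ℝ) m]
      have hdiv : c6 / (((tk + m : ℕ) : ℝ) + 1) ^ (τ0 + τ2)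
          ≤ c6 / ((tk : ℝ) + 1) ^ (τ0 + τ2) :=
        div_le_div_of_nonneg_left (le_of_lt hc6) hA hden
      have : ‖x (tk + (m + 1)) - x tk‖ ≤ ‖x (tk + m) - x tk‖
          + c6 / ((tk : ℝ) + 1) ^ (τ0 + τ2) := by
        calc ‖x (tk + (m + 1)) - x tk‖ = ‖x ((tk + m) + 1) - x tk‖ := by ring_nf
          _ ≤ ‖x (tk + m) - x tk‖ + c6 / (((tk + m : ℕ) : ℝ) + 1) ^ (τ0 + τ2) := hstep'
          _ ≤ _ := by linarith
      push_cast
      calc ‖x (tk + (m + 1)) - x tk‖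
          ≤ ‖x (tk + m) - x tk‖ + c6 / ((tk : ℝ) + 1) ^ (τ0 + τ2) := this
        _ ≤ (m : ℝ) * (c6 / ((tk : ℝ) + 1) ^ (τ0 + τ2))
            + c6 / ((tk : ℝ) + 1) ^ (τ0 + τ2) := by linarith
        _ = ((m : ℝ) + 1) * (c6 / ((tk : ℝ) + 1) ^ (τ0 + τ2)) := by ring
  have hkey := key Lk
  have h1 : 1 / (((tk : ℝ) + (Lk : ℝ)) + 1) ^ ρ0
      < (Lk : ℝ) * (c6 / ((tk : ℝ) + 1) ^ (τ0 + τ2)) := lt_of_lt_of_le htrig hkey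
  have hBeq : ((tk : ℝ) + 1 + (Lk : ℝ)) ^ ρ0 = (((tk : ℝ) + (Lk : ℝ)) + 1) ^ ρ0 := by
    ring_nf
  rw [gt_iff_lt, hBeq, div_lt_div_iff₀ hc6 hA]
  rw [div_lt_iff₀ hB, mul_comm] at h1
  have hc : c6 / ((tk : ℝ) + 1) ^ (τ0 + τ2) * ((tk : ℝ) + 1) ^ (τ0 + τ2) = c6 :=
    div_mul_cancel₀ _ hA.ne'
  nlinarith [mul_lt_mul_of_pos_right h1 hA, hc, hB.le, Nat.cast_nonneg (α := ℝ) Lk]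
end
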